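/- arXiv:1806.07795 — 6 statements merged into one kernel-verified Lean document; each statement's English description precedes it below -/
import Mathlib

section
/- Let k ∈ [0,2] and M̄ > 0. There exists a constant C > 0 (independent of N, λ and the configuration) such that: for every N ≥ 2, every family of pairwise distinct points x_1,…,x_N ∈ ℝ³ with minimal Euclidean distance d_min := min_{i≠j}|x_i−x_j| and every λ > 0 satisfying λ < (3/2)·M̄^{−1/3} and M^N(λ) ≤ M̄·N·λ³, one has for every index i: (1/N)·∑_{j≠i} |x_i−x_j|^{−k} ≤ C·( M̄·λ³/d_min^k + M̄^{k/3} ). -/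
/-- The `l∞` norm of a point of `ℝ³`. -/
noncomputable def linf (x : EuclideanSpace ℝ (Fin 3)) : ℝ := max (max |x 0| |x 1|) |x 2|

/-- The particle concentration `M^N(λ)`: the supremum over centers `c ∈ ℝ³` of the number of
particles lying in the closed `l∞`-ball of center `c` and radius `r`. -/
noncomputable def Mconc (N : ℕ) (x : Fin N → EuclideanSpace ℝ (Fin 3)) (r : ℝ) : ℕ :=
  sSup { m : ℕ | ∃ c : EuclideanSpace ℝ (Fin 3), m = Nat.card {i : Fin N | linf (x i - c) ≤ r} }

private def vec3 (f : Fin 3 → ℝ) : EuclideanSpace ℝ (Fin 3) := WithLp.toLp 2 f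

private lemma vec3_apply (f : Fin 3 → ℝ) (t : Fin 3) : vec3 f t = f t := rfl

private lemma coord_le_norm (v : EuclideanSpace ℝ (Fin 3)) (t : Fin 3) : |v t| ≤ ‖v‖ := by
  rw [EuclideanSpace.norm_eq]
  have h1 : |v t| ^ 2 ≤ ∑ i : Fin 3, ‖v i‖ ^ 2 := by
    have := Finset.single_le_sum (f := fun i => ‖v i‖ ^ 2) (fun i _ => by positivity)
      (Finset.mem_univ t)
    simpa [Real.norm_eq_abs] using this
  calc |v t| = Real.sqrt (|v t| ^ 2) := by rw [Real.sqrt_sq (abs_nonneg _)]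
  _ ≤ _ := Real.sqrt_le_sqrt h1

private lemma subdiv (m : ℕ) (hm : 1 ≤ m) (lam y : ℝ) (hlam : 0 < lam) (hy : |y| ≤ m * lam) :
    ∃ a : ℕ, a < m ∧ |y - (2*a+1-m)*lam| ≤ lam := by
  obtain ⟨hy1, hy2⟩ := abs_le.mp hy
  set u : ℝ := (y + m * lam) / (2 * lam) with hu
  have hu0 : 0 ≤ u := by
    apply div_nonneg _ (by linarith); linarith
  have hum : u ≤ m := by
    rw [hu, div_le_iff₀ (by linarith)]; nlinarith
  refine ⟨min (m-1) ⌊u⌋₊, by omega, ?_⟩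
  set a := min (m-1) ⌊u⌋₊ with ha
  have h1 : (a : ℝ) ≤ u := by
    calc (a:ℝ) ≤ (⌊u⌋₊ : ℝ) := by exact_mod_cast min_le_right _ _
    _ ≤ u := Nat.floor_le hu0
  have h2 : u ≤ a + 1 := by
    rcases le_or_gt (⌊u⌋₊ : ℕ) (m-1) with h | h
    · have : a = ⌊u⌋₊ := min_eq_right h
      rw [this]
      exact (Nat.lt_floor_add_one u).le
    · have hma : a = m - 1 := min_eq_left h.le
      rw [hma]
      have hcast : ((m-1 : ℕ) : ℝ) + 1 = m := by
        have h1m : (1:ℕ) ≤ m := hm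
        push_cast [Nat.cast_sub h1m]; ring
      rw [hcast]; exact hum
  have hy' : y = 2 * lam * u - m * lam := by
    rw [hu]; field_simp; ring
  rw [abs_le]
  constructor <;> nlinarith

private lemma card_center_le (N : ℕ) (x : Fin N → EuclideanSpace ℝ (Fin 3)) (lam : ℝ)
    (c : EuclideanSpace ℝ (Fin 3)) :
    (Finset.univ.filter (fun j => linf (x j - c) ≤ lam)).card ≤ Mconc N x lam := by
  have hbdd : BddAbove { m : ℕ | ∃ c : EuclideanSpace ℝ (Fin 3),
      m = Nat.card {i : Fin N | linf (x i - c) ≤ lam} } := by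
    refine ⟨N, fun m hm => ?_⟩
    obtain ⟨c', rfl⟩ := hm
    calc Nat.card {i : Fin N | linf (x i - c') ≤ lam}
        ≤ Nat.card (Fin N) := Nat.card_le_card_of_injective _ Subtype.val_injective
    _ = N := by simp
  have hmem : (Finset.univ.filter (fun j => linf (x j - c) ≤ lam)).card
      = Nat.card {i : Fin N | linf (x i - c) ≤ lam} := by
    rw [Nat.card_eq_fintype_card]
    simp [Fintype.card_subtype]
  rw [hmem]
  exact le_csSup hbdd ⟨c, rfl⟩

private lemma cover (N : ℕ) (x : Fin N → EuclideanSpace ℝ (Fin 3)) (lam : ℝ) (hlam : 0 < lam)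
    (i : Fin N) (m : ℕ) (hm : 1 ≤ m) (j : Fin N) (hj : dist (x i) (x j) ≤ m * lam) :
    ∃ a : Fin 3 → Fin m,
      linf (x j - (x i + vec3 (fun t => ((2*((a t : ℕ)) + 1 : ℝ) - m) * lam))) ≤ lam := by
  have hcoord : ∀ t : Fin 3, ∃ b : ℕ, b < m ∧ |(x j t - x i t) - (2*b+1-m)*lam| ≤ lam := by
    intro t
    apply subdiv m hm lam _ hlam
    have h1 : |(x j - x i) t| ≤ ‖x j - x i‖ := coord_le_norm _ t
    have h2 : ‖x j - x i‖ = dist (x i) (x j) := by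
      rw [dist_comm, dist_eq_norm]
    simp only [PiLp.sub_apply] at h1
    linarith [h2 ▸ h1]
  choose b hb1 hb2 using hcoord
  refine ⟨fun t => ⟨b t, hb1 t⟩, ?_⟩
  have key : ∀ t : Fin 3,
      |(x j - (x i + vec3 (fun t => ((2*(b t) + 1 : ℝ) - m) * lam))) t| ≤ lam := by
    intro t
    have := hb2 t
    simp only [PiLp.sub_apply, PiLp.add_apply, vec3_apply]
    convert this using 2
    ring
  exact max_le (max_le (key 0) (key 1)) (key 2)

private lemma count_le (N : ℕ) (x : Fin N → EuclideanSpace ℝ (Fin 3)) (lam : ℝ) (hlam : 0 < lam)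
    (i : Fin N) (m : ℕ) (hm : 1 ≤ m) :
    (Finset.univ.filter (fun j : Fin N => dist (x i) (x j) ≤ m * lam)).card
      ≤ m^3 * Mconc N x lam := by
  classical
  set c : (Fin 3 → Fin m) → EuclideanSpace ℝ (Fin 3) :=
    fun a => x i + vec3 (fun t => ((2*((a t : ℕ)) + 1 : ℝ) - m) * lam) with hc
  have hsub : Finset.univ.filter (fun j : Fin N => dist (x i) (x j) ≤ m * lam)
      ⊆ Finset.univ.biUnion (fun a : Fin 3 → Fin m =>
        Finset.univ.filter (fun j => linf (x j - c a) ≤ lam)) := by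
    intro j hj
    rw [Finset.mem_filter] at hj
    obtain ⟨a, ha⟩ := cover N x lam hlam i m hm j hj.2
    exact Finset.mem_biUnion.mpr ⟨a, Finset.mem_univ _,
      Finset.mem_filter.mpr ⟨Finset.mem_univ _, ha⟩⟩
  calc (Finset.univ.filter (fun j : Fin N => dist (x i) (x j) ≤ m * lam)).card
      ≤ (Finset.univ.biUnion (fun a : Fin 3 → Fin m =>
        Finset.univ.filter (fun j => linf (x j - c a) ≤ lam))).card := Finset.card_le_card hsub
  _ ≤ ∑ a : Fin 3 → Fin m, (Finset.univ.filter (fun j => linf (x j - c a) ≤ lam)).card :=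
      Finset.card_biUnion_le
  _ ≤ ∑ _a : Fin 3 → Fin m, Mconc N x lam :=
      Finset.sum_le_sum (fun a _ => card_center_le N x lam (c a))
  _ = m^3 * Mconc N x lam := by
      rw [Finset.sum_const, Finset.card_univ, Fintype.card_fun]
      simp [mul_comm]

private lemma annulus_mem (lam : ℝ) (hlam : 0 < lam) :
    ∀ (M : ℕ) (d : ℝ), lam < d → d ≤ 2^M * lam →
      ∃ m < M, (2:ℝ)^m * lam < d ∧ d ≤ 2^(m+1) * lam := by
  intro M
  induction M with
  | zero => intro d h1 h2; simp at h2; linarith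
  | succ M ih =>
    intro d h1 h2
    rcases le_or_gt d ((2:ℝ)^M * lam) with h | h
    · obtain ⟨m, hm, hm1, hm2⟩ := ih d h1 h
      exact ⟨m, by omega, hm1, hm2⟩
    · exact ⟨M, by omega, h, by rw [pow_succ] at h2 ⊢; linarith⟩

private lemma geom_bound (k lam : ℝ) (hk : k ≤ 2) (hlam : 0 < lam) :
    ∀ M : ℕ, ∑ m ∈ Finset.range M, (8:ℝ)^(m+1) * ((2:ℝ)^m * lam) ^ (-k)
      ≤ 8 * ((2:ℝ)^M) ^ ((3:ℝ) - k) * lam ^ (-k) := by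
  have h2pos : ∀ m : ℕ, (0:ℝ) < 2^m := fun m => by positivity
  have hpow_eq : ∀ m : ℕ, (8:ℝ)^m * ((2:ℝ)^m) ^ (-k) = ((2:ℝ)^m) ^ ((3:ℝ) - k) := by
    intro m
    have h8 : (8:ℝ)^m = ((2:ℝ)^m) ^ ((3:ℝ)) := by
      rw [show ((3:ℝ)) = ((3:ℕ):ℝ) by norm_num, Real.rpow_natCast, ← pow_mul,
        mul_comm m 3, pow_mul]
      norm_num
    rw [h8, ← Real.rpow_add (h2pos m)]
    ring_nf
  intro M
  induction M with
  | zero => simp [Real.rpow_nonneg hlam.le]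
  | succ M ih =>
    rw [Finset.sum_range_succ]
    have hterm : (8:ℝ)^(M+1) * ((2:ℝ)^M * lam) ^ (-k)
        = 8 * ((2:ℝ)^M) ^ ((3:ℝ) - k) * lam ^ (-k) := by
      rw [Real.mul_rpow (h2pos M).le hlam.le, ← hpow_eq M, pow_succ]
      ring
    have hstep : ((2:ℝ)^(M+1)) ^ ((3:ℝ) - k) = 2 ^ ((3:ℝ)-k) * ((2:ℝ)^M) ^ ((3:ℝ) - k) := by
      rw [pow_succ, mul_comm ((2:ℝ)^M) 2, Real.mul_rpow (by norm_num) (h2pos M).le]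
    have h2k : (2:ℝ) ≤ 2 ^ ((3:ℝ) - k) := by
      calc (2:ℝ) = 2 ^ (1:ℝ) := (Real.rpow_one 2).symm
      _ ≤ 2 ^ ((3:ℝ) - k) := Real.rpow_le_rpow_of_exponent_le one_le_two (by linarith)
    have hnn1 : (0:ℝ) ≤ ((2:ℝ)^M) ^ ((3:ℝ) - k) := Real.rpow_nonneg (h2pos M).le _
    have hnn2 : (0:ℝ) ≤ lam ^ (-k) := Real.rpow_nonneg hlam.le _
    rw [hterm, hstep]
    nlinarith [ih, mul_nonneg hnn1 hnn2]

theorem stmt0 (k : ℝ) (hk : k ∈ Set.Icc (0:ℝ) 2) (Mbar : ℝ) (hMbar : 0 < Mbar) :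
    ∃ C : ℝ, 0 < C ∧
      ∀ (N : ℕ), 2 ≤ N →
      ∀ x : Fin N → EuclideanSpace ℝ (Fin 3), Function.Injective x →
      ∀ dmin : ℝ, IsLeast {d : ℝ | ∃ i j : Fin N, i ≠ j ∧ d = dist (x i) (x j)} dmin →
      ∀ lam : ℝ, 0 < lam → lam < (3/2) * Mbar ^ (-(1:ℝ)/3) →
      (Mconc N x lam : ℝ) ≤ Mbar * N * lam ^ 3 →
      ∀ i : Fin N,
        (1 / (N : ℝ)) * ∑ j ∈ Finset.univ.filter (fun j => j ≠ i), dist (x i) (x j) ^ (-k)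
          ≤ C * (Mbar * lam ^ 3 / dmin ^ k + Mbar ^ (k / 3)) := by
  obtain ⟨hk0, hk2⟩ := hk
  refine ⟨65, by norm_num, ?_⟩
  intro N hN x hinj dmin hdmin lam hlam hlamR hMc i
  have hNpos : (0:ℝ) < N := by
    have : (2:ℝ) ≤ N := by exact_mod_cast hN
    linarith
  set Rstar : ℝ := Mbar ^ (-(1:ℝ)/3) with hRs
  have hRpos : 0 < Rstar := Real.rpow_pos_of_pos hMbar _
  -- dmin is positive
  obtain ⟨hdmem, hlb⟩ := hdmin
  obtain ⟨a, b, hab, hdab⟩ := hdmem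
  have hdmin_pos : 0 < dmin := by
    rw [hdab]; exact dist_pos.mpr (fun h => hab (hinj h))
  have hd_ge : ∀ j : Fin N, j ≠ i → dmin ≤ dist (x i) (x j) := fun j hj =>
    hlb ⟨i, j, fun h => hj h.symm, rfl⟩
  -- choice of the dyadic scale M
  obtain ⟨M, hM1, hM2⟩ : ∃ M : ℕ, Rstar ≤ 2^M * lam ∧ (2:ℝ)^M * lam < 2 * Rstar := by
    have hex : ∃ M : ℕ, Rstar ≤ 2^M * lam := by
      obtain ⟨n, hn⟩ := pow_unbounded_of_one_lt (Rstar / lam) one_lt_two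
      exact ⟨n, by rw [div_lt_iff₀ hlam] at hn; linarith⟩
    refine ⟨Nat.find hex, Nat.find_spec hex, ?_⟩
    rcases Nat.eq_zero_or_pos (Nat.find hex) with h0 | hpos
    · rw [h0]; simp only [pow_zero, one_mul]; linarith
    · have hlt := Nat.find_min hex (Nat.sub_lt hpos one_pos)
      push_neg at hlt
      have heq : Nat.find hex - 1 + 1 = Nat.find hex := Nat.succ_pred_eq_of_pos hpos
      rw [← heq, pow_succ]
      linarith
  -- counting estimate in real form
  have countR : ∀ m : ℕ, 1 ≤ m →
      ((Finset.univ.filter (fun j : Fin N => dist (x i) (x j) ≤ (m:ℝ) * lam)).card : ℝ)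
        ≤ (m:ℝ)^3 * (Mbar * N * lam^3) := by
    intro m hm
    have h1 := count_le N x lam hlam i m hm
    have h2 : ((Finset.univ.filter
        (fun j : Fin N => dist (x i) (x j) ≤ (m:ℝ) * lam)).card : ℝ)
        ≤ (m:ℝ)^3 * (Mconc N x lam : ℝ) := by exact_mod_cast h1
    have h3 : (m:ℝ)^3 * (Mconc N x lam : ℝ) ≤ (m:ℝ)^3 * (Mbar * N * lam^3) := by
      apply mul_le_mul_of_nonneg_left hMc (by positivity)
    linarith
  have hfnn : ∀ j : Fin N, 0 ≤ dist (x i) (x j) ^ (-k) :=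
    fun j => Real.rpow_nonneg dist_nonneg _
  have hRk : Rstar ^ (-k) = Mbar ^ (k/3) := by
    rw [hRs, ← Real.rpow_mul hMbar.le, show (-(1:ℝ)/3)*(-k) = k/3 by ring]
  set S : Finset (Fin N) := Finset.univ.filter (fun j : Fin N => j ≠ i) with hSdef
  set S0 : Finset (Fin N) := S.filter (fun j => dist (x i) (x j) ≤ lam) with hS0
  set Smid : Finset (Fin N) := (S.filter (fun j => ¬ dist (x i) (x j) ≤ lam)).filter
    (fun j => dist (x i) (x j) ≤ 2^M * lam) with hSmid
  set Sfar : Finset (Fin N) := (S.filter (fun j => ¬ dist (x i) (x j) ≤ lam)).filter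
    (fun j => ¬ dist (x i) (x j) ≤ 2^M * lam) with hSfar
  -- near part
  have hA : ∑ j ∈ S0, dist (x i) (x j) ^ (-k) ≤ (Mbar * N * lam^3) * dmin ^ (-k) := by
    have hcard : ((S0.card : ℕ) : ℝ) ≤ Mbar * N * lam^3 := by
      have hsub : S0 ⊆ Finset.univ.filter
          (fun j : Fin N => dist (x i) (x j) ≤ ((1:ℕ):ℝ) * lam) := by
        intro j hj
        rw [hS0, Finset.mem_filter] at hj
        simp only [Finset.mem_filter, Finset.mem_univ, true_and]
        simpa using hj.2
      have h4 := countR 1 le_rfl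
      have h5 : ((S0.card : ℕ) : ℝ) ≤ ((Finset.univ.filter
          (fun j : Fin N => dist (x i) (x j) ≤ ((1:ℕ):ℝ) * lam)).card : ℝ) := by
        exact_mod_cast Finset.card_le_card hsub
      have h6 : (((1:ℕ):ℝ))^3 * (Mbar * N * lam^3) = Mbar * N * lam^3 := by norm_num
      linarith
    have hterm : ∀ j ∈ S0, dist (x i) (x j) ^ (-k) ≤ dmin ^ (-k) := by
      intro j hj
      rw [hS0, Finset.mem_filter, hSdef, Finset.mem_filter] at hj
      exact Real.rpow_le_rpow_of_nonpos hdmin_pos (hd_ge j hj.1.2) (neg_nonpos.mpr hk0)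
    have h7 := Finset.sum_le_card_nsmul _ _ _ hterm
    rw [nsmul_eq_mul] at h7
    calc ∑ j ∈ S0, dist (x i) (x j) ^ (-k)
        ≤ ((S0.card : ℕ) : ℝ) * dmin ^ (-k) := h7
    _ ≤ (Mbar * N * lam^3) * dmin ^ (-k) :=
        mul_le_mul_of_nonneg_right hcard (Real.rpow_nonneg hdmin_pos.le _)
  -- far part
  have hC : ∑ j ∈ Sfar, dist (x i) (x j) ^ (-k) ≤ N * Mbar ^ (k/3) := by
    have hterm : ∀ j ∈ Sfar, dist (x i) (x j) ^ (-k) ≤ Mbar ^ (k/3) := by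
      intro j hj
      rw [hSfar, Finset.mem_filter] at hj
      have hd : Rstar ≤ dist (x i) (x j) := by
        have := hj.2
        push_neg at this
        linarith
      rw [← hRk]
      exact Real.rpow_le_rpow_of_nonpos hRpos hd (neg_nonpos.mpr hk0)
    have hcard : ((Sfar.card : ℕ) : ℝ) ≤ N := by
      have h1 : Sfar.card ≤ N := le_trans (Finset.card_le_univ Sfar) (by simp)
      exact_mod_cast h1
    have h3 := Finset.sum_le_card_nsmul _ _ _ hterm
    rw [nsmul_eq_mul] at h3
    calc ∑ j ∈ Sfar, dist (x i) (x j) ^ (-k)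
        ≤ ((Sfar.card : ℕ) : ℝ) * Mbar ^ (k/3) := h3
    _ ≤ N * Mbar ^ (k/3) :=
        mul_le_mul_of_nonneg_right hcard (Real.rpow_nonneg hMbar.le _)
  -- middle part
  have hB : ∑ j ∈ Smid, dist (x i) (x j) ^ (-k) ≤ 64 * N * Mbar ^ (k/3) := by
    set A : ℕ → Finset (Fin N) := fun m => S.filter
      (fun j => 2^m * lam < dist (x i) (x j) ∧ dist (x i) (x j) ≤ 2^(m+1) * lam) with hAdef
    have hBsub : Smid ⊆ (Finset.range M).biUnion A := by
      intro j hj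
      rw [hSmid, Finset.mem_filter, Finset.mem_filter] at hj
      obtain ⟨⟨hjS, hjl⟩, hju⟩ := hj
      push_neg at hjl
      obtain ⟨m, hm, hm1, hm2⟩ := annulus_mem lam hlam M _ hjl hju
      refine Finset.mem_biUnion.mpr ⟨m, Finset.mem_range.mpr hm, ?_⟩
      rw [hAdef]
      exact Finset.mem_filter.mpr ⟨hjS, hm1, hm2⟩
    have hdisj : (↑(Finset.range M) : Set ℕ).PairwiseDisjoint A := by
      have key : ∀ m m' : ℕ, m < m' → Disjoint (A m) (A m') := by
        intro m m' hmm'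
        rw [Finset.disjoint_left]
        intro j hj hj'
        rw [hAdef, Finset.mem_filter] at hj hj'
        have h1 : (2:ℝ)^(m+1) ≤ 2^m' := pow_le_pow_right₀ one_le_two hmm'
        have h2 : (2:ℝ)^(m+1) * lam ≤ 2^m' * lam :=
          mul_le_mul_of_nonneg_right h1 hlam.le
        linarith [hj.2.2, hj'.2.1]
      intro m _ m' _ hne
      rcases lt_or_gt_of_ne hne with h | h
      · exact key m m' h
      · exact (key m' m h).symm
    have hstep1 : ∑ j ∈ Smid, dist (x i) (x j) ^ (-k)
        ≤ ∑ m ∈ Finset.range M, ∑ j ∈ A m, dist (x i) (x j) ^ (-k) := by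
      calc ∑ j ∈ Smid, dist (x i) (x j) ^ (-k)
          ≤ ∑ j ∈ (Finset.range M).biUnion A, dist (x i) (x j) ^ (-k) :=
            Finset.sum_le_sum_of_subset_of_nonneg hBsub (fun j _ _ => hfnn j)
      _ = ∑ m ∈ Finset.range M, ∑ j ∈ A m, dist (x i) (x j) ^ (-k) :=
            Finset.sum_biUnion hdisj
    have hAm : ∀ m ∈ Finset.range M, ∑ j ∈ A m, dist (x i) (x j) ^ (-k)
        ≤ (Mbar * N * lam^3) * ((8:ℝ)^(m+1) * ((2:ℝ)^m * lam) ^ (-k)) := by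
      intro m _
      have h2mpos : (0:ℝ) < 2^m * lam := by positivity
      have hterm : ∀ j ∈ A m, dist (x i) (x j) ^ (-k) ≤ ((2:ℝ)^m * lam) ^ (-k) := by
        intro j hj
        rw [hAdef, Finset.mem_filter] at hj
        exact Real.rpow_le_rpow_of_nonpos h2mpos hj.2.1.le (neg_nonpos.mpr hk0)
      have hcard : (((A m).card : ℕ) : ℝ) ≤ (8:ℝ)^(m+1) * (Mbar * N * lam^3) := by
        have hsub : A m ⊆ Finset.univ.filter
            (fun j : Fin N => dist (x i) (x j) ≤ ((2^(m+1) : ℕ):ℝ) * lam) := by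
          intro j hj
          rw [hAdef, Finset.mem_filter] at hj
          simp only [Finset.mem_filter, Finset.mem_univ, true_and]
          push_cast
          exact hj.2.2
        have h4 := countR (2^(m+1)) Nat.one_le_two_pow
        have h5 : (((A m).card : ℕ) : ℝ) ≤ ((Finset.univ.filter
            (fun j : Fin N => dist (x i) (x j) ≤ ((2^(m+1) : ℕ):ℝ) * lam)).card : ℝ) := by
          exact_mod_cast Finset.card_le_card hsub
        have h6 : (((2:ℕ)^(m+1) : ℕ):ℝ)^3 = (8:ℝ)^(m+1) := by
          push_cast
          rw [← pow_mul, mul_comm (m+1) 3, pow_mul]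
          norm_num
        calc (((A m).card : ℕ) : ℝ)
            ≤ (((2:ℕ)^(m+1) : ℕ):ℝ)^3 * (Mbar * N * lam^3) := le_trans h5 h4
        _ = (8:ℝ)^(m+1) * (Mbar * N * lam^3) := by rw [h6]
      have h7 := Finset.sum_le_card_nsmul _ _ _ hterm
      rw [nsmul_eq_mul] at h7
      calc ∑ j ∈ A m, dist (x i) (x j) ^ (-k)
          ≤ (((A m).card : ℕ) : ℝ) * ((2:ℝ)^m * lam) ^ (-k) := h7
      _ ≤ ((8:ℝ)^(m+1) * (Mbar * N * lam^3)) * ((2:ℝ)^m * lam) ^ (-k) :=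
          mul_le_mul_of_nonneg_right hcard (Real.rpow_nonneg h2mpos.le _)
      _ = (Mbar * N * lam^3) * ((8:ℝ)^(m+1) * ((2:ℝ)^m * lam) ^ (-k)) := by ring
    have hgeom := geom_bound k lam hk2 hlam M
    have hsum2 : ∑ m ∈ Finset.range M,
        (Mbar * N * lam^3) * ((8:ℝ)^(m+1) * ((2:ℝ)^m * lam) ^ (-k))
        ≤ (Mbar * N * lam^3) * (8 * ((2:ℝ)^M) ^ ((3:ℝ) - k) * lam ^ (-k)) := by
      rw [← Finset.mul_sum]
      exact mul_le_mul_of_nonneg_left hgeom (by positivity)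
    -- final algebraic bound for the middle part
    have e1 : lam^(3:ℕ) * lam^(-k) = lam ^ ((3:ℝ)-k) := by
      rw [← Real.rpow_natCast lam 3, ← Real.rpow_add hlam]
      congr 1
    have e2 : ((2:ℝ)^M)^((3:ℝ)-k) * lam^((3:ℝ)-k) = ((2:ℝ)^M * lam)^((3:ℝ)-k) :=
      (Real.mul_rpow (by positivity) hlam.le).symm
    have e3 : ((2:ℝ)^M * lam)^((3:ℝ)-k) ≤ (2*Rstar)^((3:ℝ)-k) :=
      Real.rpow_le_rpow (by positivity) hM2.le (by linarith)
    have e4 : ((2:ℝ)*Rstar)^((3:ℝ)-k) = 2^((3:ℝ)-k) * Rstar^((3:ℝ)-k) :=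
      Real.mul_rpow (by norm_num) hRpos.le
    have e5 : (2:ℝ)^((3:ℝ)-k) ≤ 8 := by
      calc (2:ℝ)^((3:ℝ)-k) ≤ 2^(3:ℝ) :=
          Real.rpow_le_rpow_of_exponent_le one_le_two (by linarith)
      _ = 8 := by
          rw [show (3:ℝ) = ((3:ℕ):ℝ) by norm_num, Real.rpow_natCast]
          norm_num
    have e6 : Mbar * Rstar^((3:ℝ)-k) = Mbar^(k/3) := by
      rw [hRs, ← Real.rpow_mul hMbar.le]
      nth_rewrite 1 [← Real.rpow_one Mbar]
      rw [← Real.rpow_add hMbar, show (1:ℝ) + (-(1:ℝ)/3)*((3:ℝ)-k) = k/3 by ring]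
    have hmid2 : (Mbar * N * lam^3) * (8 * ((2:ℝ)^M) ^ ((3:ℝ) - k) * lam ^ (-k))
        ≤ 64 * N * Mbar ^ (k/3) := by
      calc (Mbar * N * lam^3) * (8 * ((2:ℝ)^M) ^ ((3:ℝ) - k) * lam ^ (-k))
          = 8 * (Mbar * N) * (((2:ℝ)^M)^((3:ℝ)-k) * (lam^(3:ℕ) * lam^(-k))) := by ring
      _ = 8 * (Mbar * N) * ((2:ℝ)^M * lam)^((3:ℝ)-k) := by rw [e1, e2]
      _ ≤ 8 * (Mbar * N) * (2*Rstar)^((3:ℝ)-k) := by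
          apply mul_le_mul_of_nonneg_left e3 (by positivity)
      _ = 8 * (Mbar * N) * (2^((3:ℝ)-k) * Rstar^((3:ℝ)-k)) := by rw [e4]
      _ ≤ 8 * (Mbar * N) * (8 * Rstar^((3:ℝ)-k)) := by
          apply mul_le_mul_of_nonneg_left
            (mul_le_mul_of_nonneg_right e5 (Real.rpow_nonneg hRpos.le _)) (by positivity)
      _ = 64 * N * (Mbar * Rstar^((3:ℝ)-k)) := by ring
      _ = 64 * N * Mbar^(k/3) := by rw [e6]
    calc ∑ j ∈ Smid, dist (x i) (x j) ^ (-k)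
        ≤ ∑ m ∈ Finset.range M, ∑ j ∈ A m, dist (x i) (x j) ^ (-k) := hstep1
    _ ≤ ∑ m ∈ Finset.range M,
        (Mbar * N * lam^3) * ((8:ℝ)^(m+1) * ((2:ℝ)^m * lam) ^ (-k)) :=
        Finset.sum_le_sum hAm
    _ ≤ (Mbar * N * lam^3) * (8 * ((2:ℝ)^M) ^ ((3:ℝ) - k) * lam ^ (-k)) := hsum2
    _ ≤ 64 * N * Mbar ^ (k/3) := hmid2
  -- combine the pieces
  have hsplit1 : ∑ j ∈ S, dist (x i) (x j) ^ (-k)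
      = ∑ j ∈ S0, dist (x i) (x j) ^ (-k)
      + ∑ j ∈ S.filter (fun j => ¬ dist (x i) (x j) ≤ lam), dist (x i) (x j) ^ (-k) :=
    (Finset.sum_filter_add_sum_filter_not _ _ _).symm
  have hsplit2 : ∑ j ∈ S.filter (fun j => ¬ dist (x i) (x j) ≤ lam), dist (x i) (x j) ^ (-k)
      = ∑ j ∈ Smid, dist (x i) (x j) ^ (-k) + ∑ j ∈ Sfar, dist (x i) (x j) ^ (-k) :=
    (Finset.sum_filter_add_sum_filter_not _ _ _).symm
  have htotal : ∑ j ∈ S, dist (x i) (x j) ^ (-k)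
      ≤ Mbar * N * lam^3 * dmin ^ (-k) + 65 * N * Mbar ^ (k/3) := by
    rw [hsplit1, hsplit2]
    linarith [hA, hB, hC]
  -- conclude
  have hdk : Mbar * lam^3 / dmin ^ k = Mbar * lam^3 * dmin ^ (-k) := by
    rw [Real.rpow_neg hdmin_pos.le, div_eq_mul_inv]
  have hnn1 : 0 ≤ Mbar * lam^3 * dmin ^ (-k) :=
    mul_nonneg (by positivity) (Real.rpow_nonneg hdmin_pos.le _)
  have hnn2 : 0 ≤ Mbar ^ (k/3) := Real.rpow_nonneg hMbar.le _
  rw [hdk]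
  have hfin : (1 / (N:ℝ)) * ∑ j ∈ S, dist (x i) (x j) ^ (-k)
      ≤ (1 / (N:ℝ)) * (Mbar * N * lam^3 * dmin ^ (-k) + 65 * N * Mbar ^ (k/3)) :=
    mul_le_mul_of_nonneg_left htotal (by positivity)
  have heq : (1 / (N:ℝ)) * (Mbar * N * lam^3 * dmin ^ (-k) + 65 * N * Mbar ^ (k/3))
      = Mbar * lam^3 * dmin ^ (-k) + 65 * Mbar ^ (k/3) := by
    field_simp
  rw [heq] at hfin
  calc (1 / (N:ℝ)) * ∑ j ∈ S, dist (x i) (x j) ^ (-k)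
      ≤ Mbar * lam^3 * dmin ^ (-k) + 65 * Mbar ^ (k/3) := hfin
  _ ≤ 65 * (Mbar * lam^3 * dmin ^ (-k) + Mbar ^ (k/3)) := by linarith
end

section
/- Let M̄ > 0. There exists a constant C > 0 (independent of N, λ and the configuration) such that: for every N ≥ 2, every family of pairwise distinct points x_1,…,x_N ∈ ℝ³ with minimal Euclidean distance d_min := min_{i≠j}|x_i−x_j| and every λ > 0 satisfying λ ≤ (2/3)·M̄^{−1/3} and M^N(λ) ≤ M̄·N·λ³, one has for every index i: (1/N)·∑_{j≠i} |x_i−x_j|^{−3} ≤ C·M̄·( λ³/d_min³ + |log(M̄^{1/3}·λ)| + 1 ). -/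
open Finset

lemma abs_coord_le_norm (y : EuclideanSpace ℝ (Fin 3)) (a : Fin 3) : |y a| ≤ ‖y‖ := by
  rw [EuclideanSpace.norm_eq, ← Real.sqrt_sq_eq_abs]
  apply Real.sqrt_le_sqrt
  have := Finset.single_le_sum (f := fun b => ‖y b‖^2) (fun b _ => sq_nonneg _) (Finset.mem_univ a)
  simpa [Real.norm_eq_abs, sq_abs] using this

lemma linf_le_norm (y : EuclideanSpace ℝ (Fin 3)) : linf y ≤ ‖y‖ := by
  unfold linf
  exact max_le (max_le (abs_coord_le_norm y 0) (abs_coord_le_norm y 1)) (abs_coord_le_norm y 2)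

lemma coord_le_linf (y : EuclideanSpace ℝ (Fin 3)) (a : Fin 3) : |y a| ≤ linf y := by
  unfold linf
  fin_cases a
  · exact le_max_of_le_left (le_max_left _ _)
  · exact le_max_of_le_left (le_max_right _ _)
  · exact le_max_right _ _

/-- index of the dyadic subinterval of length `2λ` of `[-2^m λ, 2^m λ]` containing `v`. -/
noncomputable def idx (lam : ℝ) (m : ℕ) (v : ℝ) : Fin (2^m) :=
  ⟨min (2^m - 1) ⌊(v + 2^m*lam)/(2*lam)⌋₊, by
    have h1 : 1 ≤ 2^m := Nat.one_le_two_pow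
    omega⟩

lemma idx_spec {lam : ℝ} (hlam : 0 < lam) (m : ℕ) {v : ℝ} (hv : |v| ≤ 2^m * lam) :
    |v - (-(2^m*lam) + lam + 2*lam*((idx lam m v : ℕ) : ℝ))| ≤ lam := by
  have h2l : (0:ℝ) < 2*lam := by linarith
  have hvl : -(2^m*lam) ≤ v := (abs_le.mp hv).1
  have hvu : v ≤ 2^m*lam := (abs_le.mp hv).2
  have hge : 0 ≤ (v + 2^m*lam)/(2*lam) := div_nonneg (by linarith) h2l.le
  set s : ℕ := ⌊(v + 2^m*lam)/(2*lam)⌋₊ with hs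
  have hfl : (s:ℝ) ≤ (v + 2^m*lam)/(2*lam) := Nat.floor_le hge
  have hfu : (v + 2^m*lam)/(2*lam) < s + 1 := Nat.lt_floor_add_one _
  have hfl' : (s:ℝ) * (2*lam) ≤ v + 2^m*lam := (le_div_iff₀ h2l).mp hfl
  have hfu' : v + 2^m*lam < ((s:ℝ)+1) * (2*lam) := (div_lt_iff₀ h2l).mp hfu
  have h1 : 1 ≤ 2^m := Nat.one_le_two_pow (n := m)
  by_cases hcase : s ≤ 2^m - 1
  · have hidx : ((idx lam m v : ℕ) : ℝ) = (s:ℝ) := by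
      simp only [idx, ← hs, min_eq_right hcase]
    rw [hidx, abs_le]
    constructor <;> nlinarith
  · -- then s ≥ 2^m, forcing v = 2^m λ
    have hs2 : 2^m ≤ s := by omega
    have hs2' : ((2:ℝ))^m ≤ (s:ℝ) := by
      calc ((2:ℝ))^m = ((2^m : ℕ) : ℝ) := by push_cast; ring
      _ ≤ (s:ℝ) := Nat.cast_le.mpr hs2
    have hveq : v = 2^m * lam := by nlinarith
    have hidx : ((idx lam m v : ℕ) : ℝ) = (2:ℝ)^m - 1 := by
      simp only [idx, ← hs, min_eq_left (le_of_not_ge hcase)]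
      push_cast [Nat.cast_sub h1]
      ring
    rw [hidx, hveq, abs_le]
    constructor <;> nlinarith

lemma natcard_setOf_eq {N : ℕ} (P : Fin N → Prop) [DecidablePred P] :
    Nat.card {i : Fin N | P i} = (Finset.univ.filter P).card := by
  simp [Nat.card_eq_fintype_card, Fintype.card_subtype]

lemma card_ball_le_Mconc (N : ℕ) (x : Fin N → EuclideanSpace ℝ (Fin 3)) (r : ℝ)
    (c : EuclideanSpace ℝ (Fin 3)) :
    (Finset.univ.filter fun j : Fin N => linf (x j - c) ≤ r).card ≤ Mconc N x r := by
  classical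
  apply le_csSup
  · refine ⟨N, fun m hm => ?_⟩
    obtain ⟨c', hc'⟩ := hm
    rw [hc', natcard_setOf_eq]
    calc (Finset.univ.filter fun j : Fin N => linf (x j - c') ≤ r).card
        ≤ (Finset.univ : Finset (Fin N)).card := Finset.card_filter_le _ _
      _ = N := by simp
  · exact ⟨c, (natcard_setOf_eq _).symm⟩

lemma cover_card (N : ℕ) (x : Fin N → EuclideanSpace ℝ (Fin 3)) {lam : ℝ} (hlam : 0 < lam)
    (m : ℕ) (c : EuclideanSpace ℝ (Fin 3)) :
    ((Finset.univ.filter fun j : Fin N => linf (x j - c) ≤ 2^m * lam).card : ℝ)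
      ≤ 8^m * (Mconc N x lam : ℝ) := by
  classical
  set S := Finset.univ.filter fun j : Fin N => linf (x j - c) ≤ 2^m * lam with hS
  set F : Fin N → Fin (2^m) × Fin (2^m) × Fin (2^m) :=
    fun j => (idx lam m ((x j - c) 0), idx lam m ((x j - c) 1), idx lam m ((x j - c) 2)) with hF
  have hcard : S.card = ∑ t ∈ (Finset.univ : Finset (Fin (2^m) × Fin (2^m) × Fin (2^m))),
      (S.filter fun j => F j = t).card :=
    Finset.card_eq_sum_card_fiberwise (fun j _ => Finset.mem_univ _)
  have hfiber : ∀ t : Fin (2^m) × Fin (2^m) × Fin (2^m),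
      (S.filter fun j => F j = t).card ≤ Mconc N x lam := by
    intro t
    set ctr : Fin 3 → ℝ := fun a =>
      -(2^m*lam) + lam + 2*lam*(((![t.1, t.2.1, t.2.2] a : Fin (2^m)) : ℕ) : ℝ) with hctr
    set c' : EuclideanSpace ℝ (Fin 3) := c + (WithLp.equiv 2 (Fin 3 → ℝ)).symm ctr with hc'
    refine le_trans (Finset.card_le_card ?_) (card_ball_le_Mconc N x lam c')
    intro j hj
    rw [Finset.mem_filter] at hj
    obtain ⟨hjS, hjt⟩ := hj
    rw [hS, Finset.mem_filter] at hjS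
    have hlinf : linf (x j - c) ≤ 2^m * lam := hjS.2
    rw [Finset.mem_filter]
    refine ⟨Finset.mem_univ _, ?_⟩
    have key : ∀ a : Fin 3, |(x j - c') a| ≤ lam := by
      intro a
      have hva : |(x j - c) a| ≤ 2^m * lam := le_trans (coord_le_linf _ a) hlinf
      have hspec := idx_spec hlam m hva
      have hidxa : idx lam m ((x j - c) a) = ![t.1, t.2.1, t.2.2] a := by
        fin_cases a
        · exact congrArg Prod.fst hjt
        · exact congrArg (fun p => p.2.1) hjt
        · exact congrArg (fun p => p.2.2) hjt
      have hrw : (x j - c') a = (x j - c) a - ctr a := by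
        simp only [hc']
        show x j a - (c a + ctr a) = (x j a - c a) - ctr a
        ring
      rw [hidxa] at hspec
      rw [hrw]
      simpa [hctr] using hspec
    unfold linf
    exact max_le (max_le (key 0) (key 1)) (key 2)
  calc (S.card : ℝ) = ∑ t ∈ (Finset.univ : Finset (Fin (2^m) × Fin (2^m) × Fin (2^m))),
        ((S.filter fun j => F j = t).card : ℝ) := by rw [hcard]; push_cast; ring
    _ ≤ ∑ _t ∈ (Finset.univ : Finset (Fin (2^m) × Fin (2^m) × Fin (2^m))),
        (Mconc N x lam : ℝ) := Finset.sum_le_sum (fun t _ => Nat.cast_le.mpr (hfiber t))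
    _ = 8^m * (Mconc N x lam : ℝ) := by
        rw [Finset.sum_const]
        simp only [Finset.card_univ, Fintype.card_prod, Fintype.card_fin]
        push_cast
        have : ((2:ℝ)^m) * ((2:ℝ)^m * (2:ℝ)^m) = 8^m := by
          rw [show (8:ℝ) = 2^3 by norm_num, ← pow_mul]
          ring
        rw [nsmul_eq_mul]
        push_cast
        rw [this]

lemma sum_union_le_real {α : Type*} [DecidableEq α] (f : α → ℝ) (hf : ∀ a, 0 ≤ f a)
    (A B : Finset α) : ∑ a ∈ A ∪ B, f a ≤ ∑ a ∈ A, f a + ∑ a ∈ B, f a := by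
  have := Finset.sum_union_inter (s₁ := A) (s₂ := B) (f := f)
  have h2 : 0 ≤ ∑ a ∈ A ∩ B, f a := Finset.sum_nonneg (fun a _ => hf a)
  linarith

lemma sum_biUnion_le_real {ι α : Type*} [DecidableEq α] (f : α → ℝ) (hf : ∀ a, 0 ≤ f a)
    (s : Finset ι) (t : ι → Finset α) :
    ∑ a ∈ s.biUnion t, f a ≤ ∑ i ∈ s, ∑ a ∈ t i, f a := by
  classical
  induction s using Finset.induction_on with
  | empty => simp
  | insert i s hi ih =>
    rw [Finset.biUnion_insert, Finset.sum_insert hi]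
    exact le_trans (sum_union_le_real f hf _ _) (by linarith)

lemma exists_shell {lam : ℝ} (hlam : 0 < lam) (d : ℝ) (K : ℕ) (h1 : lam < d)
    (h2 : d ≤ 2^K * lam) : ∃ k < K, 2^k * lam < d ∧ d ≤ 2^(k+1) * lam := by
  induction K with
  | zero => exfalso; rw [pow_zero, one_mul] at h2; linarith
  | succ K ih =>
    by_cases h : d ≤ 2^K * lam
    · obtain ⟨k, hk, h3⟩ := ih h
      exact ⟨k, Nat.lt_succ_of_lt hk, h3⟩
    · exact ⟨K, Nat.lt_succ_self K, lt_of_not_ge h, h2⟩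

theorem stmt1 (Mbar : ℝ) (hMbar : 0 < Mbar) :
    ∃ C : ℝ, 0 < C ∧
      ∀ (N : ℕ), 2 ≤ N →
      ∀ x : Fin N → EuclideanSpace ℝ (Fin 3), Function.Injective x →
      ∀ dmin : ℝ, IsLeast {d : ℝ | ∃ i j : Fin N, i ≠ j ∧ d = dist (x i) (x j)} dmin →
      ∀ lam : ℝ, 0 < lam → lam ≤ (2/3) * Mbar ^ (-(1:ℝ)/3) →
      (Mconc N x lam : ℝ) ≤ Mbar * N * lam ^ 3 →
      ∀ i : Fin N,
        (1 / (N : ℝ)) * ∑ j ∈ Finset.univ.filter (fun j => j ≠ i), (dist (x i) (x j))⁻¹ ^ 3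
          ≤ C * Mbar * (lam ^ 3 / dmin ^ 3 + |Real.log (Mbar ^ ((1:ℝ)/3) * lam)| + 1) := by
  classical
  refine ⟨16, by norm_num, ?_⟩
  intro N hN x hx dmin hdmin lam hlam hlam2 hM i
  set d : Fin N → ℝ := fun j => dist (x i) (x j) with hd
  set f : Fin N → ℝ := fun j => (d j)⁻¹ ^ 3 with hf
  have hfnn : ∀ j, 0 ≤ f j := fun j => by positivity
  have hNpos : (0:ℝ) < N := by positivity
  -- dmin facts
  have hdminpos : 0 < dmin := by
    obtain ⟨⟨a, b, hab, hdd⟩, _⟩ := hdmin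
    rw [hdd]
    exact dist_pos.mpr (fun h => hab (hx h))
  have hdmin_le : ∀ j, j ≠ i → dmin ≤ d j := by
    intro j hj
    exact hdmin.2 ⟨i, j, Ne.symm hj, rfl⟩
  -- threshold A
  set A : ℝ := Mbar ^ (-(1:ℝ)/3) with hA
  have hApos : 0 < A := Real.rpow_pos_of_pos hMbar _
  have hPpos : 0 < Mbar ^ ((1:ℝ)/3) := Real.rpow_pos_of_pos hMbar _
  have hPA : Mbar ^ ((1:ℝ)/3) * A = 1 := by
    rw [hA, ← Real.rpow_add hMbar]; norm_num
  have hlamA : lam < A := lt_of_le_of_lt hlam2 (by linarith)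
  have hsmall : Mbar ^ ((1:ℝ)/3) * lam ≤ 2/3 := by
    calc Mbar ^ ((1:ℝ)/3) * lam ≤ Mbar ^ ((1:ℝ)/3) * ((2/3) * A) := by
          apply mul_le_mul_of_nonneg_left hlam2 hPpos.le
      _ = (2/3) * (Mbar ^ ((1:ℝ)/3) * A) := by ring
      _ = 2/3 := by rw [hPA]; ring
  set L : ℝ := |Real.log (Mbar ^ ((1:ℝ)/3) * lam)| with hL
  have hLnn : 0 ≤ L := abs_nonneg _
  -- the number of shells
  set K : ℕ := ⌈Real.logb 2 (A / lam)⌉₊ with hK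
  have hratio : 1 < A / lam := (one_lt_div hlam).mpr hlamA
  have hlogbnn : 0 ≤ Real.logb 2 (A / lam) := Real.logb_nonneg one_lt_two hratio.le
  have h2K : A ≤ 2^K * lam := by
    have h1 : A / lam ≤ (2:ℝ) ^ (K:ℝ) := by
      rw [← Real.rpow_logb two_pos (by norm_num) (by positivity : (0:ℝ) < A / lam)]
      exact Real.rpow_le_rpow_of_exponent_le one_le_two (Nat.le_ceil _)
    rw [Real.rpow_natCast] at h1
    calc A = (A / lam) * lam := by field_simp
      _ ≤ 2^K * lam := mul_le_mul_of_nonneg_right h1 hlam.le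
  have hKle : (K:ℝ) ≤ 2 * L + 1 := by
    have hAlam : A / lam = (Mbar ^ ((1:ℝ)/3) * lam)⁻¹ := by
      rw [hA, show -(1:ℝ)/3 = -((1:ℝ)/3) by ring, Real.rpow_neg hMbar.le]
      field_simp
    have hlog : Real.log (A / lam) = L := by
      rw [hAlam, Real.log_inv, hL]
      have hz : Real.log (Mbar ^ ((1:ℝ)/3) * lam) < 0 :=
        Real.log_neg (by positivity) (by linarith)
      rw [abs_of_neg hz]
    have hlog2 : (1:ℝ)/2 < Real.log 2 := by
      have := Real.log_two_gt_d9; linarith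
    have hlbL : Real.logb 2 (A / lam) ≤ 2 * L := by
      rw [Real.logb, hlog]
      rw [div_le_iff₀ (by linarith : (0:ℝ) < Real.log 2)]
      nlinarith
    have := Nat.ceil_lt_add_one hlogbnn
    have hKlt : (K:ℝ) < Real.logb 2 (A / lam) + 1 := this
    linarith
  -- counting at dyadic scales
  have hcount : ∀ m : ℕ,
      ((Finset.univ.filter fun j : Fin N => linf (x j - x i) ≤ 2^m * lam).card : ℝ)
        ≤ 8^m * (Mbar * N * lam^3) := by
    intro m
    calc ((Finset.univ.filter fun j : Fin N => linf (x j - x i) ≤ 2^m * lam).card : ℝ)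
        ≤ 8^m * (Mconc N x lam : ℝ) := cover_card N x hlam m (x i)
      _ ≤ 8^m * (Mbar * N * lam^3) := by
          apply mul_le_mul_of_nonneg_left hM (by positivity)
  have hdist_linf : ∀ j : Fin N, ∀ r : ℝ, d j ≤ r → linf (x j - x i) ≤ r := by
    intro j r hr
    calc linf (x j - x i) ≤ ‖x j - x i‖ := linf_le_norm _
      _ = d j := by rw [hd, ← dist_eq_norm, dist_comm]
      _ ≤ r := hr
  -- the three parts
  set S : Finset (Fin N) := Finset.univ.filter (fun j => j ≠ i) with hSdef
  set An : Finset (Fin N) := S.filter (fun j => d j ≤ lam) with hAn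
  set B : ℕ → Finset (Fin N) :=
    fun k => Finset.univ.filter (fun j => 2^k * lam < d j ∧ d j ≤ 2^(k+1) * lam) with hB
  set Cf : Finset (Fin N) := Finset.univ.filter (fun j => 2^K * lam < d j) with hCf
  -- near part
  have hnear : ∑ j ∈ An, f j ≤ Mbar * N * lam^3 * (dmin⁻¹)^3 := by
    have hcardAn : (An.card : ℝ) ≤ Mbar * N * lam^3 := by
      have hsub : An ⊆ Finset.univ.filter fun j : Fin N => linf (x j - x i) ≤ 2^0 * lam := by
        intro j hj
        rw [hAn, Finset.mem_filter] at hj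
        rw [Finset.mem_filter]
        exact ⟨Finset.mem_univ _, hdist_linf j _ (by rw [pow_zero, one_mul]; exact hj.2)⟩
      calc (An.card : ℝ) ≤ _ := Nat.cast_le.mpr (Finset.card_le_card hsub)
        _ ≤ 8^0 * (Mbar * N * lam^3) := hcount 0
        _ = Mbar * N * lam^3 := by norm_num
    have hterm : ∀ j ∈ An, f j ≤ (dmin⁻¹)^3 := by
      intro j hj
      rw [hAn, Finset.mem_filter, hSdef, Finset.mem_filter] at hj
      have hdj : dmin ≤ d j := hdmin_le j hj.1.2
      exact pow_le_pow_left₀ (by positivity) (inv_anti₀ hdminpos hdj) 3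
    calc ∑ j ∈ An, f j ≤ An.card • (dmin⁻¹)^3 := Finset.sum_le_card_nsmul _ _ _ hterm
      _ = (An.card : ℝ) * (dmin⁻¹)^3 := by rw [nsmul_eq_mul]
      _ ≤ Mbar * N * lam^3 * (dmin⁻¹)^3 := by
          apply mul_le_mul_of_nonneg_right hcardAn (by positivity)
  -- shell part
  have hshell : ∀ k : ℕ, ∑ j ∈ B k, f j ≤ 8 * (Mbar * N) := by
    intro k
    have hcardB : ((B k).card : ℝ) ≤ 8^(k+1) * (Mbar * N * lam^3) := by
      have hsub : B k ⊆ Finset.univ.filter fun j : Fin N => linf (x j - x i) ≤ 2^(k+1) * lam := by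
        intro j hj
        rw [hB, Finset.mem_filter] at hj
        rw [Finset.mem_filter]
        exact ⟨Finset.mem_univ _, hdist_linf j _ hj.2.2⟩
      calc ((B k).card : ℝ) ≤ _ := Nat.cast_le.mpr (Finset.card_le_card hsub)
        _ ≤ 8^(k+1) * (Mbar * N * lam^3) := hcount (k+1)
    have h2k : (0:ℝ) < 2^k * lam := by positivity
    have hterm : ∀ j ∈ B k, f j ≤ ((2^k * lam)⁻¹)^3 := by
      intro j hj
      rw [hB, Finset.mem_filter] at hj
      exact pow_le_pow_left₀ (by positivity) (inv_anti₀ h2k hj.2.1.le) 3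
    calc ∑ j ∈ B k, f j ≤ (B k).card • ((2^k * lam)⁻¹)^3 := Finset.sum_le_card_nsmul _ _ _ hterm
      _ = ((B k).card : ℝ) * ((2^k * lam)⁻¹)^3 := by rw [nsmul_eq_mul]
      _ ≤ 8^(k+1) * (Mbar * N * lam^3) * ((2^k * lam)⁻¹)^3 := by
          apply mul_le_mul_of_nonneg_right hcardB (by positivity)
      _ = 8 * (Mbar * N) := by
          have h8 : ((2:ℝ)^k)^3 = 8^k := by
            rw [show (8:ℝ) = 2^3 by norm_num, ← pow_mul, ← pow_mul]
            ring_nf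
          have hlam3 : lam ≠ 0 := hlam.ne'
          have h2k3 : ((2:ℝ)^k) ≠ 0 := by positivity
          field_simp
          rw [h8]
          ring
  -- far part
  have hfar : ∑ j ∈ Cf, f j ≤ N * Mbar := by
    have hterm : ∀ j ∈ Cf, f j ≤ Mbar := by
      intro j hj
      rw [hCf, Finset.mem_filter] at hj
      have hdjA : A ≤ d j := le_trans h2K hj.2.le
      have hfj : f j ≤ (A⁻¹)^3 :=
        pow_le_pow_left₀ (by positivity) (inv_anti₀ hApos hdjA) 3
      have hAinv : (A⁻¹)^3 = Mbar := by
        rw [hA, show -(1:ℝ)/3 = -((1:ℝ)/3) by ring, Real.rpow_neg hMbar.le, inv_inv,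
          ← Real.rpow_natCast (Mbar ^ ((1:ℝ)/3)) 3, ← Real.rpow_mul hMbar.le]
        norm_num
      rw [hAinv] at hfj
      exact hfj
    calc ∑ j ∈ Cf, f j ≤ Cf.card • Mbar := Finset.sum_le_card_nsmul _ _ _ hterm
      _ = (Cf.card : ℝ) * Mbar := by rw [nsmul_eq_mul]
      _ ≤ N * Mbar := by
          apply mul_le_mul_of_nonneg_right _ hMbar.le
          calc (Cf.card : ℝ) ≤ ((Finset.univ : Finset (Fin N)).card : ℝ) :=
                Nat.cast_le.mpr (Finset.card_filter_le _ _)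
            _ = N := by simp
  -- splitting the sum
  have hsplit : ∑ j ∈ S, f j ≤ ∑ j ∈ An, f j + (∑ k ∈ Finset.range K, ∑ j ∈ B k, f j
      + ∑ j ∈ Cf, f j) := by
    have h1 : ∑ j ∈ S, f j = ∑ j ∈ An, f j + ∑ j ∈ S.filter (fun j => ¬ d j ≤ lam), f j := by
      rw [hAn, Finset.sum_filter_add_sum_filter_not]
    rw [h1]
    have h2 : S.filter (fun j => ¬ d j ≤ lam) ⊆ (Finset.range K).biUnion B ∪ Cf := by
      intro j hj
      rw [Finset.mem_filter] at hj
      have hgt : lam < d j := lt_of_not_ge hj.2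
      by_cases hc : d j ≤ 2^K * lam
      · obtain ⟨k, hk, h3, h4⟩ := exists_shell hlam (d j) K hgt hc
        apply Finset.mem_union_left
        rw [Finset.mem_biUnion]
        refine ⟨k, Finset.mem_range.mpr hk, ?_⟩
        simp only [hB, Finset.mem_filter]
        exact ⟨Finset.mem_univ _, h3, h4⟩
      · apply Finset.mem_union_right
        simp only [hCf, Finset.mem_filter]
        exact ⟨Finset.mem_univ _, lt_of_not_ge hc⟩
    have h3 : ∑ j ∈ S.filter (fun j => ¬ d j ≤ lam), f j
        ≤ ∑ j ∈ (Finset.range K).biUnion B ∪ Cf, f j :=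
      Finset.sum_le_sum_of_subset_of_nonneg h2 (fun j _ _ => hfnn j)
    have h4 : ∑ j ∈ (Finset.range K).biUnion B ∪ Cf, f j
        ≤ ∑ j ∈ (Finset.range K).biUnion B, f j + ∑ j ∈ Cf, f j :=
      sum_union_le_real f hfnn _ _
    have h5 : ∑ j ∈ (Finset.range K).biUnion B, f j
        ≤ ∑ k ∈ Finset.range K, ∑ j ∈ B k, f j :=
      sum_biUnion_le_real f hfnn _ _
    linarith
  have hmid : ∑ k ∈ Finset.range K, ∑ j ∈ B k, f j ≤ K * (8 * (Mbar * N)) := by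
    calc ∑ k ∈ Finset.range K, ∑ j ∈ B k, f j
        ≤ ∑ _k ∈ Finset.range K, 8 * (Mbar * N) := Finset.sum_le_sum (fun k _ => hshell k)
      _ = K * (8 * (Mbar * N)) := by rw [Finset.sum_const, Finset.card_range, nsmul_eq_mul]
  -- put everything together
  have htotal : ∑ j ∈ S, f j ≤ Mbar * N * lam^3 * (dmin⁻¹)^3 + K * (8 * (Mbar * N)) + N * Mbar :=
    by linarith
  have hgoal : (1 / (N:ℝ)) * ∑ j ∈ S, f j
      ≤ Mbar * (lam^3 / dmin^3) + 8 * K * Mbar + Mbar := by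
    rw [div_mul_eq_mul_div, one_mul, div_le_iff₀ hNpos]
    calc ∑ j ∈ S, f j ≤ Mbar * N * lam^3 * (dmin⁻¹)^3 + K * (8 * (Mbar * N)) + N * Mbar :=
          htotal
      _ = (Mbar * (lam^3 / dmin^3) + 8 * K * Mbar + Mbar) * N := by
          field_simp
  have hfinal : Mbar * (lam^3 / dmin^3) + 8 * K * Mbar + Mbar
      ≤ 16 * Mbar * (lam^3 / dmin^3 + L + 1) := by
    have hT : 0 ≤ lam^3 / dmin^3 := by positivity
    nlinarith [hKle, hMbar, hLnn, hT]
  exact le_trans hgoal hfinal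
end

section
/- Let N ≥ 1 and let (x_1,…,x_N) and (y_1,…,y_N) be two families of points in ℝ³ such that |y_i−y_j| ≥ (1/2)·|x_i−x_j| (Euclidean norm) for all i ≠ j. Then for every λ > 0, the concentration of the family (y_i) satisfies M_Y^N(λ) ≤ 8⁴·M_X^N(λ), where M_X^N(λ) and M_Y^N(λ) denote the concentrations of the families (x_i) and (y_i) respectively. -/
lemma abs_coord_le_norm_s6 (v : EuclideanSpace ℝ (Fin 3)) (d : Fin 3) : |v d| ≤ ‖v‖ := by
  rw [EuclideanSpace.norm_eq, ← Real.sqrt_sq (abs_nonneg (v d))]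
  apply Real.sqrt_le_sqrt
  rw [sq_abs]
  calc v d ^ 2 = ‖v d‖ ^ 2 := by rw [Real.norm_eq_abs, sq_abs]
    _ ≤ ∑ i, ‖v i‖ ^ 2 := Finset.single_le_sum (f := fun i => ‖v i‖ ^ 2) (fun i _ => sq_nonneg _) (Finset.mem_univ d)

lemma norm_le_sum3 (v : EuclideanSpace ℝ (Fin 3)) : ‖v‖ ≤ |v 0| + |v 1| + |v 2| := by
  rw [EuclideanSpace.norm_eq, Fin.sum_univ_three]
  have h : ‖v 0‖^2 + ‖v 1‖^2 + ‖v 2‖^2 ≤ (|v 0| + |v 1| + |v 2|)^2 := by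
    simp only [Real.norm_eq_abs]
    nlinarith [abs_nonneg (v 0), abs_nonneg (v 1), abs_nonneg (v 2), sq_abs (v 0), sq_abs (v 1), sq_abs (v 2)]
  calc Real.sqrt (‖v 0‖^2 + ‖v 1‖^2 + ‖v 2‖^2) ≤ Real.sqrt ((|v 0| + |v 1| + |v 2|)^2) := Real.sqrt_le_sqrt h
    _ = |v 0| + |v 1| + |v 2| := Real.sqrt_sq (by positivity)

lemma exists_k (lam t : ℝ) (hlam : 0 < lam) (ht : |t| ≤ 12*lam) :
    ∃ k : Fin 12, |t - (2*((k:ℕ):ℝ) - 11)*lam| ≤ lam := by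
  set K : ℤ := ⌊(t + 12*lam)/(2*lam)⌋ with hK
  have h2 : (0:ℝ) < 2*lam := by linarith
  obtain ⟨ht1, ht2⟩ := abs_le.1 ht
  have hK0 : 0 ≤ K := Int.le_floor.2 (by rw [le_div_iff₀ h2]; push_cast; linarith)
  have hlo : (K:ℝ) * (2*lam) ≤ t + 12*lam := (le_div_iff₀ h2).1 (Int.floor_le _)
  have hhi : t + 12*lam < ((K:ℝ)+1) * (2*lam) := by
    have := Int.lt_floor_add_one ((t + 12*lam)/(2*lam))
    rw [div_lt_iff₀ h2] at this
    linarith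
  refine ⟨⟨min K.toNat 11, by omega⟩, ?_⟩
  have hcast : ((min K.toNat 11 : ℕ) : ℝ) = min (K:ℝ) 11 := by
    rcases le_or_gt K 11 with hc | hc
    · have h1 : min K.toNat 11 = K.toNat := by omega
      rw [h1, min_eq_left (by exact_mod_cast hc)]
      exact_mod_cast Int.toNat_of_nonneg hK0
    · have h1 : min K.toNat 11 = 11 := by omega
      rw [h1, min_eq_right (by exact_mod_cast hc.le)]
      norm_num
  rw [abs_le]
  rcases le_or_gt K 11 with hc | hc
  · have hc' : (K:ℝ) ≤ 11 := by exact_mod_cast hc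
    rw [show (((⟨min K.toNat 11, by omega⟩ : Fin 12) : ℕ) : ℝ) = min (K:ℝ) 11 from hcast, min_eq_left hc']
    constructor <;> nlinarith
  · have hc' : (11:ℝ) ≤ (K:ℝ) := by exact_mod_cast hc.le
    rw [show (((⟨min K.toNat 11, by omega⟩ : Fin 12) : ℕ) : ℝ) = min (K:ℝ) 11 from hcast, min_eq_right hc']
    constructor <;> nlinarith

noncomputable def pickk (lam t : ℝ) : Fin 12 :=
  if h : ∃ k : Fin 12, |t - (2*((k:ℕ):ℝ) - 11)*lam| ≤ lam then h.choose else 0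

lemma pickk_spec (lam t : ℝ) (hlam : 0 < lam) (ht : |t| ≤ 12*lam) :
    |t - (2*(((pickk lam t):ℕ):ℝ) - 11)*lam| ≤ lam := by
  have h := exists_k lam t hlam ht
  rw [pickk, dif_pos h]
  exact h.choose_spec

lemma linf_le_iff {x : EuclideanSpace ℝ (Fin 3)} {r : ℝ} :
    linf x ≤ r ↔ |x 0| ≤ r ∧ |x 1| ≤ r ∧ |x 2| ≤ r := by
  rw [linf, max_le_iff, max_le_iff]; tauto

theorem stmt6 (N : ℕ) (hN : 1 ≤ N) (x y : Fin N → EuclideanSpace ℝ (Fin 3))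
    (h : ∀ i j : Fin N, i ≠ j → (1/2) * dist (x i) (x j) ≤ dist (y i) (y j))
    (lam : ℝ) (hlam : 0 < lam) :
    Mconc N y lam ≤ 8 ^ 4 * Mconc N x lam := by
  classical
  have hcard : ∀ (z : Fin N → EuclideanSpace ℝ (Fin 3)) (c : EuclideanSpace ℝ (Fin 3)),
      Nat.card {i : Fin N | linf (z i - c) ≤ lam}
        = (Finset.univ.filter (fun i => linf (z i - c) ≤ lam)).card := by
    intro z c
    rw [Nat.card_eq_fintype_card]
    exact Fintype.card_subtype _
  have hBddx : BddAbove { m : ℕ | ∃ c, m = Nat.card {i : Fin N | linf (x i - c) ≤ lam} } := by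
    refine ⟨N, fun m hm => ?_⟩
    obtain ⟨c, rfl⟩ := hm
    rw [hcard]
    exact le_trans (Finset.card_filter_le _ _) (by simp)
  rw [Mconc]
  have hne : { m : ℕ | ∃ c, m = Nat.card {i : Fin N | linf (y i - c) ≤ lam} }.Nonempty :=
    ⟨Nat.card {i : Fin N | linf (y i - 0) ≤ lam}, 0, rfl⟩
  apply csSup_le hne
  rintro m ⟨c, rfl⟩
  rw [hcard]
  set T : Finset (Fin N) := Finset.univ.filter (fun i => linf (y i - c) ≤ lam) with hT
  rcases T.eq_empty_or_nonempty with he | ⟨i0, hi0⟩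
  · simp [he]
  have hmem : ∀ i ∈ T, linf (y i - c) ≤ lam := by
    intro i hi
    exact (Finset.mem_filter.1 hi).2
  -- coordinate bound
  have key : ∀ i ∈ T, ∀ d : Fin 3, |(x i - x i0) d| ≤ 12 * lam := by
    intro i hi d
    rcases eq_or_ne i i0 with rfl | hne
    · simp; positivity
    · have hd : dist (x i) (x i0) ≤ 2 * dist (y i) (y i0) := by
        have := h i i0 hne
        linarith
      have hyc : ∀ j ∈ T, ‖y j - c‖ ≤ 3 * lam := by
        intro j hj
        have h1 := hmem j hj
        rw [linf_le_iff] at h1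
        have := norm_le_sum3 (y j - c)
        linarith [this, h1.1, h1.2.1, h1.2.2]
      have hdy : dist (y i) (y i0) ≤ 6 * lam := by
        calc dist (y i) (y i0) ≤ dist (y i) c + dist c (y i0) := dist_triangle _ _ _
          _ = ‖y i - c‖ + ‖y i0 - c‖ := by rw [dist_eq_norm, dist_comm, dist_eq_norm]
          _ ≤ 3 * lam + 3 * lam := add_le_add (hyc i hi) (hyc i0 hi0)
          _ = 6 * lam := by ring
      have : ‖x i - x i0‖ ≤ 12 * lam := by
        rw [← dist_eq_norm]
        linarith
      exact le_trans (abs_coord_le_norm_s6 _ d) this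
  -- the map to cubes
  set f : Fin N → Fin 12 × Fin 12 × Fin 12 := fun i =>
    (pickk lam ((x i - x i0) 0), pickk lam ((x i - x i0) 1), pickk lam ((x i - x i0) 2)) with hf
  set ctr : Fin 12 × Fin 12 × Fin 12 → EuclideanSpace ℝ (Fin 3) := fun k =>
    x i0 + (WithLp.equiv 2 (Fin 3 → ℝ)).symm
      ![(2*((k.1:ℕ):ℝ)-11)*lam, (2*((k.2.1:ℕ):ℝ)-11)*lam, (2*((k.2.2:ℕ):ℝ)-11)*lam] with hctr
  have fiber : ∀ k : Fin 12 × Fin 12 × Fin 12,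
      (T.filter (fun i => f i = k)).card ≤ Mconc N x lam := by
    intro k
    have hsub : T.filter (fun i => f i = k) ⊆
        Finset.univ.filter (fun i => linf (x i - ctr k) ≤ lam) := by
      intro i hi
      obtain ⟨hiT, hik⟩ := Finset.mem_filter.1 hi
      refine Finset.mem_filter.2 ⟨Finset.mem_univ _, ?_⟩
      rw [linf_le_iff]
      have h0 := pickk_spec lam ((x i - x i0) 0) hlam (key i hiT 0)
      have h1 := pickk_spec lam ((x i - x i0) 1) hlam (key i hiT 1)
      have h2 := pickk_spec lam ((x i - x i0) 2) hlam (key i hiT 2)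
      have hk1 : pickk lam ((x i - x i0) 0) = k.1 := congrArg Prod.fst hik
      have hk2 : pickk lam ((x i - x i0) 1) = k.2.1 := congrArg (fun p => p.2.1) hik
      have hk3 : pickk lam ((x i - x i0) 2) = k.2.2 := congrArg (fun p => p.2.2) hik
      rw [hk1] at h0
      rw [hk2] at h1
      rw [hk3] at h2
      have e0 : (x i - ctr k) 0 = (x i - x i0) 0 - (2*((k.1:ℕ):ℝ)-11)*lam := by
        simp [hctr, PiLp.sub_apply, PiLp.add_apply, WithLp.equiv_symm_apply]; ring
      have e1 : (x i - ctr k) 1 = (x i - x i0) 1 - (2*((k.2.1:ℕ):ℝ)-11)*lam := by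
        simp [hctr, PiLp.sub_apply, PiLp.add_apply, WithLp.equiv_symm_apply]; ring
      have e2 : (x i - ctr k) 2 = (x i - x i0) 2 - (2*((k.2.2:ℕ):ℝ)-11)*lam := by
        simp [hctr, PiLp.sub_apply, PiLp.add_apply, WithLp.equiv_symm_apply]; ring
      rw [e0, e1, e2]
      exact ⟨h0, h1, h2⟩
    calc (T.filter (fun i => f i = k)).card
        ≤ (Finset.univ.filter (fun i => linf (x i - ctr k) ≤ lam)).card :=
          Finset.card_le_card hsub
      _ = Nat.card {i : Fin N | linf (x i - ctr k) ≤ lam} := (hcard x (ctr k)).symm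
      _ ≤ Mconc N x lam := le_csSup hBddx ⟨ctr k, rfl⟩
  calc T.card = ∑ k : Fin 12 × Fin 12 × Fin 12, (T.filter (fun i => f i = k)).card :=
        Finset.card_eq_sum_card_fiberwise (fun i _ => Finset.mem_univ (f i))
    _ ≤ ∑ _k : Fin 12 × Fin 12 × Fin 12, Mconc N x lam :=
        Finset.sum_le_sum (fun k _ => fiber k)
    _ = 12^3 * Mconc N x lam := by
        simp only [Finset.sum_const, Finset.card_univ, Fintype.card_prod, Fintype.card_fin,
          smul_eq_mul]
        norm_num
    _ ≤ 8^4 * Mconc N x lam := Nat.mul_le_mul_right _ (by norm_num)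
end

section
/- Let N ≥ 1, M̄ > 0, λ > 0 and x_1,…,x_N ∈ ℝ³ with M^N(λ) ≤ M̄·N·λ³. Define ρ̃ : ℝ³ → ℝ by ρ̃(x) = (1/N)·∑_{i=1}^N 1_{B_∞(x_i, λ/3)}(x) / (2λ/3)³, where B_∞(x_i, λ/3) is the closed l∞-ball of center x_i and radius λ/3 and (2λ/3)³ is its Lebesgue measure. Then ρ̃(x) ≤ (27/8)·M̄ for every x ∈ ℝ³. -/
lemma linf_neg (v : EuclideanSpace ℝ (Fin 3)) : linf (-v) = linf v := by
  simp [linf]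

theorem stmt11 (N : ℕ) (hN : 1 ≤ N) (Mbar lam : ℝ) (hMbar : 0 < Mbar) (hlam : 0 < lam)
    (x : Fin N → EuclideanSpace ℝ (Fin 3))
    (hconc : (Mconc N x lam : ℝ) ≤ Mbar * N * lam ^ 3) :
    ∀ z : EuclideanSpace ℝ (Fin 3),
      (1 / (N : ℝ)) * ∑ i : Fin N,
          (if linf (z - x i) ≤ lam / 3 then (1:ℝ) else 0) / (2 * lam / 3) ^ 3
        ≤ 27 / 8 * Mbar := by
  intro z
  set c : ℝ := (2 * lam / 3) ^ 3 with hc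
  have hcpos : 0 < c := by positivity
  have hNpos : (0:ℝ) < N := by exact_mod_cast hN
  set S : Finset (Fin N) := Finset.univ.filter (fun i => linf (z - x i) ≤ lam / 3) with hS
  set T : Finset (Fin N) := Finset.univ.filter (fun i => linf (x i - z) ≤ lam) with hT
  have hsum : ∑ i : Fin N, (if linf (z - x i) ≤ lam / 3 then (1:ℝ) else 0) / c
      = (S.card : ℝ) / c := by
    rw [← Finset.sum_div, Finset.sum_boole]
  have hST : S ⊆ T := by
    intro i hi
    rw [hS, Finset.mem_filter] at hi
    rw [hT, Finset.mem_filter]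
    refine ⟨Finset.mem_univ _, ?_⟩
    have : linf (x i - z) = linf (z - x i) := by
      rw [← linf_neg (z - x i), neg_sub]
    rw [this]
    linarith [hi.2]
  -- T.card = Nat.card of the set
  have hTcard : T.card = Nat.card {i : Fin N | linf (x i - z) ≤ lam} := by
    rw [Nat.card_eq_fintype_card]
    exact (Fintype.card_subtype _).symm
  -- T.card ≤ Mconc
  have hmem : T.card ∈ { m : ℕ | ∃ c : EuclideanSpace ℝ (Fin 3),
      m = Nat.card {i : Fin N | linf (x i - c) ≤ lam} } := ⟨z, hTcard⟩
  have hbdd : BddAbove { m : ℕ | ∃ c : EuclideanSpace ℝ (Fin 3),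
      m = Nat.card {i : Fin N | linf (x i - c) ≤ lam} } := by
    refine ⟨N, fun m hm => ?_⟩
    obtain ⟨w, hw⟩ := hm
    rw [hw, Nat.card_eq_fintype_card]
    classical
    exact le_trans (Fintype.card_le_of_injective _ Subtype.val_injective) (le_of_eq (Fintype.card_fin N))
  have hTM : T.card ≤ Mconc N x lam := le_csSup hbdd hmem
  have hSreal : (S.card : ℝ) ≤ Mbar * N * lam ^ 3 := by
    calc (S.card : ℝ) ≤ (T.card : ℝ) := by exact_mod_cast Finset.card_le_card hST
      _ ≤ (Mconc N x lam : ℝ) := by exact_mod_cast hTM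
      _ ≤ Mbar * N * lam ^ 3 := hconc
  rw [hsum]
  have hceq : (8:ℝ) * lam ^ 3 / 27 = c := by rw [hc]; ring
  have h1 : (S.card : ℝ) / c ≤ 27 / 8 * Mbar * N := by
    rw [div_le_iff₀ hcpos]
    calc (S.card : ℝ) ≤ Mbar * N * lam ^ 3 := hSreal
      _ = 27 / 8 * Mbar * N * ((8:ℝ) * lam ^ 3 / 27) := by ring
      _ = 27 / 8 * Mbar * N * c := by rw [hceq]
  rw [one_div, inv_mul_le_iff₀ hNpos]
  calc (S.card : ℝ) / c ≤ 27 / 8 * Mbar * N := h1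
    _ = ↑N * (27 / 8 * Mbar) := by ring
end

section
/- Let M̄ > 0. There exists a constant C > 0 such that: for every N ≥ 1, every λ > 0 with λ < (3/2)·M̄^{−1/3}, every family of points x_1,…,x_N ∈ ℝ³ with M^N(λ) ≤ M̄·N·λ³, every x ∈ ℝ³ and every d > 0, one has (1/N)·∑_{i : |x−x_i| > d/2} |x−x_i|^{−1} ≤ C·( M̄·λ³/d + M̄^{1/3} ), where the sum runs over the indices i with |x−x_i| > d/2 (Euclidean norm). -/
open Finset

lemma aux_linf_le {v : EuclideanSpace ℝ (Fin 3)} {lam : ℝ} (h : ∀ j, |v j| ≤ lam) :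
    linf v ≤ lam := max_le (max_le (h 0) (h 1)) (h 2)

lemma aux_coord_le (v : EuclideanSpace ℝ (Fin 3)) (j : Fin 3) : |v j| ≤ ‖v‖ := by
  rw [EuclideanSpace.norm_eq, show |v j| = Real.sqrt (‖v j‖^2) by
    rw [Real.sqrt_sq_eq_abs]; simp]
  exact Real.sqrt_le_sqrt
    (Finset.single_le_sum (f := fun i => ‖v i‖^2) (fun i _ => sq_nonneg _) (mem_univ j))

lemma aux_natcard (N : ℕ) (P : Fin N → Prop) [DecidablePred P] :
    Nat.card {i : Fin N | P i} = (univ.filter P).card := by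
  simp [Nat.card_eq_fintype_card, Fintype.card_subtype]

lemma aux_cube_card (N : ℕ) (x : Fin N → EuclideanSpace ℝ (Fin 3)) (lam : ℝ)
    (c : EuclideanSpace ℝ (Fin 3)) :
    (univ.filter (fun i => linf (x i - c) ≤ lam)).card ≤ Mconc N x lam := by
  classical
  apply le_csSup
  · refine ⟨N, fun m hm => ?_⟩
    obtain ⟨c', rfl⟩ := hm
    rw [aux_natcard]
    exact le_trans (card_filter_le _ _) (by simp)
  · exact ⟨c, (aux_natcard N _).symm⟩

lemma aux_interval (R lam : ℝ) (hR : 0 < R) (hlam : 0 < lam) (u : ℝ)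
    (hu0 : 0 ≤ u) (hu2 : u ≤ 2 * R) :
    ∃ k : ℕ, k < ⌈R / lam⌉₊ ∧ |u - (2 * (k : ℝ) + 1) * (R / ⌈R / lam⌉₊)| ≤ lam := by
  have hm0 : 0 < ⌈R / lam⌉₊ := Nat.ceil_pos.mpr (div_pos hR hlam)
  set m := ⌈R / lam⌉₊ with hmdef
  have hmR : (0:ℝ) < m := by exact_mod_cast hm0
  have hRlam : R ≤ (m:ℝ) * lam := by
    have := Nat.le_ceil (R / lam)
    rw [div_le_iff₀ hlam] at this
    linarith [this]
  have hRm : R / (m:ℝ) ≤ lam := by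
    rw [div_le_iff₀ hmR]; linarith [hRlam]
  set h := 2 * R / (m:ℝ) with hhdef
  have hh : 0 < h := by positivity
  have key : ∃ k : ℕ, k < m ∧ (k:ℝ) * h ≤ u ∧ u ≤ ((k:ℝ) + 1) * h := by
    by_cases hc : ⌊u / h⌋₊ ≤ m - 1
    · refine ⟨⌊u / h⌋₊, by omega, ?_, ?_⟩
      · have := Nat.floor_le (by positivity : (0:ℝ) ≤ u / h)
        calc (⌊u / h⌋₊ : ℝ) * h ≤ (u / h) * h := by nlinarith
          _ = u := by field_simp
      · have := Nat.lt_succ_floor (u / h) -- u/h < floor + 1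
        have h2 : u / h < (⌊u / h⌋₊ : ℝ) + 1 := by exact_mod_cast this
        calc u = (u / h) * h := by field_simp
          _ ≤ ((⌊u / h⌋₊:ℝ) + 1) * h := by nlinarith
    · refine ⟨m - 1, by omega, ?_, ?_⟩
      · have hge : (m:ℝ) ≤ ⌊u / h⌋₊ := by exact_mod_cast (by omega : m ≤ ⌊u / h⌋₊)
        have := Nat.floor_le (by positivity : (0:ℝ) ≤ u / h)
        have h3 : (m:ℝ) ≤ u / h := le_trans hge this
        have hcast : ((m - 1 : ℕ) : ℝ) = (m:ℝ) - 1 := by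
          have : 1 ≤ m := hm0
          push_cast [this]; ring
        rw [hcast]
        have huh : (u / h) * h = u := by field_simp
        nlinarith [h3, hh]
      · have hcast : ((m - 1 : ℕ) : ℝ) = (m:ℝ) - 1 := by
          have : 1 ≤ m := hm0
          push_cast [this]; ring
        rw [hcast]
        have hne : (m:ℝ) ≠ 0 := ne_of_gt hmR
        have : ((m:ℝ) - 1 + 1) * h = 2 * R := by rw [hhdef]; field_simp; ring
        linarith [this, hu2]
  obtain ⟨k, hk, h1, h2⟩ := key
  refine ⟨k, hk, ?_⟩
  have hexp : (2 * (k:ℝ) + 1) * (R / m) = (k:ℝ) * h + h / 2 := by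
    rw [hhdef]; field_simp
  rw [hexp, abs_le]
  constructor <;> nlinarith [h1, h2, hRm, hh]

lemma aux_count (N : ℕ) (x : Fin N → EuclideanSpace ℝ (Fin 3)) (lam : ℝ) (hlam : 0 < lam)
    (z : EuclideanSpace ℝ (Fin 3)) (R : ℝ) (hR : 0 < R) :
    ((univ.filter (fun i => dist z (x i) ≤ R)).card : ℝ)
      ≤ (R / lam + 1) ^ 3 * (Mconc N x lam : ℝ) := by
  classical
  have hm0 : 0 < ⌈R / lam⌉₊ := Nat.ceil_pos.mpr (div_pos hR hlam)
  set m := ⌈R / lam⌉₊ with hmdef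
  set cpt : (Fin 3 → Fin m) → EuclideanSpace ℝ (Fin 3) :=
    fun κ => (WithLp.equiv 2 (Fin 3 → ℝ)).symm
      (fun j => z j - R + (2 * ((κ j : ℕ) : ℝ) + 1) * (R / (m:ℝ))) with hcpt
  have hsub : univ.filter (fun i => dist z (x i) ≤ R) ⊆
      (Finset.univ : Finset (Fin 3 → Fin m)).biUnion
        (fun κ => univ.filter (fun i => linf (x i - cpt κ) ≤ lam)) := by
    intro i hi
    rw [mem_filter] at hi
    have hdist : dist z (x i) ≤ R := hi.2
    have hcoord : ∀ j : Fin 3, |x i j - z j| ≤ R := by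
      intro j
      have h1 : |(x i - z) j| ≤ ‖x i - z‖ := aux_coord_le _ j
      have h2 : ‖x i - z‖ = dist z (x i) := by
        rw [dist_comm, dist_eq_norm]
      simpa using le_trans h1 (h2.le.trans hdist)
    have hk : ∀ j : Fin 3, ∃ k : ℕ, k < m ∧
        |(x i j - z j + R) - (2 * (k : ℝ) + 1) * (R / (m:ℝ))| ≤ lam := by
      intro j
      have := hcoord j
      rw [abs_le] at this
      exact aux_interval R lam hR hlam (x i j - z j + R) (by linarith [this.1]) (by linarith [this.2])
    choose k hkm hkb using hk
    refine mem_biUnion.mpr ⟨fun j => ⟨k j, hkm j⟩, mem_univ _, ?_⟩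
    rw [mem_filter]
    refine ⟨mem_univ _, aux_linf_le fun j => ?_⟩
    have happ : (x i - cpt (fun j => ⟨k j, hkm j⟩)) j
        = x i j - (z j - R + (2 * ((k j : ℕ) : ℝ) + 1) * (R / (m:ℝ))) := by
      rw [hcpt]
      simp [WithLp.equiv_symm_apply, PiLp.toLp_apply]
    rw [happ]
    have := hkb j
    calc |x i j - (z j - R + (2 * ((k j : ℕ) : ℝ) + 1) * (R / (m:ℝ)))|
        = |(x i j - z j + R) - (2 * ((k j : ℕ) : ℝ) + 1) * (R / (m:ℝ))| := by ring_nf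
      _ ≤ lam := this
  have hcard : (univ.filter (fun i => dist z (x i) ≤ R)).card ≤ m ^ 3 * Mconc N x lam := by
    calc (univ.filter (fun i => dist z (x i) ≤ R)).card
        ≤ ((Finset.univ : Finset (Fin 3 → Fin m)).biUnion
            (fun κ => univ.filter (fun i => linf (x i - cpt κ) ≤ lam))).card :=
          card_le_card hsub
      _ ≤ ∑ κ : Fin 3 → Fin m, (univ.filter (fun i => linf (x i - cpt κ) ≤ lam)).card :=
          card_biUnion_le
      _ ≤ ∑ _κ : Fin 3 → Fin m, Mconc N x lam :=
          Finset.sum_le_sum (fun κ _ => aux_cube_card N x lam (cpt κ))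
      _ = m ^ 3 * Mconc N x lam := by
          rw [Finset.sum_const, Finset.card_univ]
          simp [Fintype.card_fun, mul_comm]
  have hmle : (m : ℝ) ≤ R / lam + 1 := by
    exact_mod_cast (Nat.ceil_lt_add_one (le_of_lt (div_pos hR hlam))).le
  calc ((univ.filter (fun i => dist z (x i) ≤ R)).card : ℝ)
      ≤ ((m:ℝ)) ^ 3 * (Mconc N x lam : ℝ) := by exact_mod_cast hcard
    _ ≤ (R / lam + 1) ^ 3 * (Mconc N x lam : ℝ) := by
        apply mul_le_mul_of_nonneg_right _ (Nat.cast_nonneg _)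
        exact pow_le_pow_left₀ (Nat.cast_nonneg _) hmle 3

lemma aux_dyadic (N : ℕ) (x : Fin N → EuclideanSpace ℝ (Fin 3))
    (z : EuclideanSpace ℝ (Fin 3)) (r : ℝ) (hr : 0 < r) (K : ℕ) :
    ∑ i ∈ univ.filter (fun i => r < dist z (x i)), (dist z (x i))⁻¹
      ≤ (∑ k ∈ Finset.range K,
          ((univ.filter (fun i => dist z (x i) ≤ 2 ^ (k+1) * r)).card : ℝ) * (2 ^ k * r)⁻¹)
        + ∑ i ∈ univ.filter (fun i => 2 ^ K * r < dist z (x i)), (dist z (x i))⁻¹ := by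
  classical
  induction K with
  | zero => simp
  | succ K ih =>
    refine le_trans ih ?_
    rw [Finset.sum_range_succ, add_assoc]
    apply add_le_add_right
    set s := univ.filter (fun i => 2 ^ K * r < dist z (x i)) with hs
    have hsplit := Finset.sum_filter_add_sum_filter_not s
      (fun i => dist z (x i) ≤ 2 ^ (K+1) * r) (fun i => (dist z (x i))⁻¹)
    rw [← hsplit]
    have hpos : (0:ℝ) < 2 ^ K * r := by positivity
    apply add_le_add
    · refine le_trans (Finset.sum_le_card_nsmul _ _ ((2 ^ K * r)⁻¹) ?_) ?_
      · intro i hi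
        rw [mem_filter, hs, mem_filter] at hi
        exact inv_anti₀ hpos (le_of_lt hi.1.2)
      · rw [nsmul_eq_mul]
        apply mul_le_mul_of_nonneg_right _ (by positivity)
        have : s.filter (fun i => dist z (x i) ≤ 2 ^ (K+1) * r)
            ⊆ univ.filter (fun i => dist z (x i) ≤ 2 ^ (K+1) * r) :=
          Finset.filter_subset_filter _ (filter_subset _ univ)
        exact_mod_cast Finset.card_le_card this
    · apply Finset.sum_le_sum_of_subset_of_nonneg
      · intro i hi
        rw [mem_filter, hs, mem_filter] at hi
        rw [mem_filter]
        exact ⟨mem_univ _, lt_of_not_ge hi.2⟩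
      · intro i _ _
        exact inv_nonneg.mpr dist_nonneg

set_option maxHeartbeats 1000000 in
theorem stmt12 (Mbar : ℝ) (hMbar : 0 < Mbar) :
    ∃ C : ℝ, 0 < C ∧
      ∀ (N : ℕ), 1 ≤ N →
      ∀ lam : ℝ, 0 < lam → lam < (3/2) * Mbar ^ (-(1:ℝ)/3) →
      ∀ x : Fin N → EuclideanSpace ℝ (Fin 3),
      (Mconc N x lam : ℝ) ≤ Mbar * N * lam ^ 3 →
      ∀ z : EuclideanSpace ℝ (Fin 3), ∀ d : ℝ, 0 < d →
        (1 / (N : ℝ)) * ∑ i ∈ Finset.univ.filter (fun i => d / 2 < dist z (x i)),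
            (dist z (x i))⁻¹
          ≤ C * (Mbar * lam ^ 3 / d + Mbar ^ ((1:ℝ)/3)) := by
  classical
  refine ⟨100, by norm_num, ?_⟩
  intro N hN lam hlam hlamu x hM z d hd
  set A := Mbar ^ ((1:ℝ)/3) with hA
  have hApos : 0 < A := Real.rpow_pos_of_pos hMbar _
  have hA3 : A ^ 3 = Mbar := by
    rw [hA, ← Real.rpow_natCast (Mbar ^ ((1:ℝ)/3)) 3, ← Real.rpow_mul hMbar.le]
    norm_num
  have hAinv : Mbar ^ (-(1:ℝ)/3) = A⁻¹ := by
    rw [neg_div, Real.rpow_neg hMbar.le, hA]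
  rw [hAinv] at hlamu
  have hNpos : (0:ℝ) < N := by exact_mod_cast hN
  have hNne : (N:ℝ) ≠ 0 := ne_of_gt hNpos
  have hlne : lam ≠ 0 := ne_of_gt hlam
  have hT0 : 0 ≤ Mbar * lam ^ 3 / d := by positivity
  have hcnt : ∀ R : ℝ, 0 < R →
      ((univ.filter (fun i => dist z (x i) ≤ R)).card : ℝ)
        ≤ 8 * Mbar * N * (R ^ 3 + lam ^ 3) := by
    intro R hR
    have h1 := aux_count N x lam hlam z R hR
    have h2 : (R / lam + 1) ^ 3 * (Mconc N x lam : ℝ)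
        ≤ (R / lam + 1) ^ 3 * (Mbar * N * lam ^ 3) :=
      mul_le_mul_of_nonneg_left hM (by positivity)
    have h3 : (R / lam + 1) ^ 3 * (Mbar * N * lam ^ 3) = Mbar * N * (R + lam) ^ 3 := by
      field_simp
    have h5 : (R + lam) ^ 3 ≤ 8 * (R ^ 3 + lam ^ 3) := by
      nlinarith [sq_nonneg (R - lam), hR.le, hlam.le, mul_pos hR hlam]
    have h4 : Mbar * N * (R + lam) ^ 3 ≤ 8 * Mbar * N * (R ^ 3 + lam ^ 3) := by
      calc Mbar * N * (R + lam) ^ 3 ≤ Mbar * N * (8 * (R ^ 3 + lam ^ 3)) :=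
            mul_le_mul_of_nonneg_left h5 (by positivity)
        _ = 8 * Mbar * N * (R ^ 3 + lam ^ 3) := by ring
    linarith
  by_cases hcase : A⁻¹ ≤ d / 2
  · -- d large: every term is at most A
    have hsum : ∑ i ∈ univ.filter (fun i => d / 2 < dist z (x i)), (dist z (x i))⁻¹
        ≤ (N : ℝ) * A := by
      refine le_trans (Finset.sum_le_card_nsmul _ _ A ?_) ?_
      · intro i hi
        rw [mem_filter] at hi
        have h1 : A⁻¹ ≤ dist z (x i) := le_trans hcase hi.2.le
        calc (dist z (x i))⁻¹ ≤ (A⁻¹)⁻¹ := inv_anti₀ (by positivity) h1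
          _ = A := inv_inv A
      · rw [nsmul_eq_mul]
        apply mul_le_mul_of_nonneg_right _ hApos.le
        exact Nat.cast_le.mpr (le_trans (card_filter_le _ _) (by simp))
    calc (1 / (N : ℝ)) * ∑ i ∈ univ.filter (fun i => d / 2 < dist z (x i)), (dist z (x i))⁻¹
        ≤ (1 / (N : ℝ)) * ((N : ℝ) * A) := by
          apply mul_le_mul_of_nonneg_left hsum (by positivity)
      _ = A := by field_simp
      _ ≤ 100 * (Mbar * lam ^ 3 / d + A) := by linarith [hApos, hT0]
  · push_neg at hcase
    set r := d / 2 with hrdef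
    have hr : 0 < r := by rw [hrdef]; linarith
    obtain ⟨K, hK1, hK2⟩ : ∃ K : ℕ, A⁻¹ ≤ 2 ^ K * r ∧ 2 ^ K * r ≤ 2 * A⁻¹ := by
      have hex : ∃ n : ℕ, A⁻¹ ≤ 2 ^ n * r := by
        obtain ⟨n, hn⟩ := pow_unbounded_of_one_lt (A⁻¹ / r) one_lt_two
        refine ⟨n, ?_⟩
        rw [div_lt_iff₀ hr] at hn
        linarith
      have hK1 : A⁻¹ ≤ 2 ^ Nat.find hex * r := Nat.find_spec hex
      have hKne : Nat.find hex ≠ 0 := by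
        intro h
        rw [h] at hK1
        simp at hK1
        linarith
      have hKpred : ¬ (A⁻¹ ≤ 2 ^ (Nat.find hex - 1) * r) :=
        Nat.find_min hex (Nat.pred_lt hKne)
      push_neg at hKpred
      refine ⟨Nat.find hex, hK1, ?_⟩
      have h2K : (2:ℝ) ^ Nat.find hex = 2 * 2 ^ (Nat.find hex - 1) := by
        conv_lhs => rw [show Nat.find hex = (Nat.find hex - 1) + 1 by omega]
        rw [pow_succ']
      rw [h2K]
      nlinarith [hKpred]
    have hdy := aux_dyadic N x z r hr K
    -- tail bound
    have htail : ∑ i ∈ univ.filter (fun i => 2 ^ K * r < dist z (x i)), (dist z (x i))⁻¹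
        ≤ (N : ℝ) * A := by
      refine le_trans (Finset.sum_le_card_nsmul _ _ A ?_) ?_
      · intro i hi
        rw [mem_filter] at hi
        have h1 : A⁻¹ ≤ dist z (x i) := le_trans hK1 hi.2.le
        calc (dist z (x i))⁻¹ ≤ (A⁻¹)⁻¹ := inv_anti₀ (by positivity) h1
          _ = A := inv_inv A
      · rw [nsmul_eq_mul]
        apply mul_le_mul_of_nonneg_right _ hApos.le
        exact Nat.cast_le.mpr (le_trans (card_filter_le _ _) (by simp))
    -- head bound
    have hterm : ∀ k ∈ Finset.range K,
        ((univ.filter (fun i => dist z (x i) ≤ 2 ^ (k+1) * r)).card : ℝ) * (2 ^ k * r)⁻¹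
          ≤ 64 * Mbar * N * r ^ 2 * (4:ℝ) ^ k
            + (8 * Mbar * N * lam ^ 3 / r) * ((1:ℝ)/2) ^ k := by
      intro k _
      have hp1 : (0:ℝ) < 2 ^ (k+1) * r := by positivity
      have h1 := hcnt (2 ^ (k+1) * r) hp1
      have h4k : (4:ℝ) ^ k = ((2:ℝ) ^ k) ^ 2 := by
        rw [← pow_mul, mul_comm, pow_mul]
        norm_num
      have hhalf : ((1:ℝ)/2) ^ k = ((2:ℝ) ^ k)⁻¹ := by
        rw [one_div, inv_pow]
      have hpk : ((2:ℝ) ^ k) ≠ 0 := by positivity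
      have heq : 8 * Mbar * N * ((2 ^ (k+1) * r) ^ 3 + lam ^ 3) * (2 ^ k * r)⁻¹
          = 64 * Mbar * N * r ^ 2 * (4:ℝ) ^ k
            + (8 * Mbar * N * lam ^ 3 / r) * ((1:ℝ)/2) ^ k := by
        rw [h4k, hhalf, pow_succ']
        field_simp
        ring
      calc ((univ.filter (fun i => dist z (x i) ≤ 2 ^ (k+1) * r)).card : ℝ) * (2 ^ k * r)⁻¹
          ≤ 8 * Mbar * N * ((2 ^ (k+1) * r) ^ 3 + lam ^ 3) * (2 ^ k * r)⁻¹ :=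
            mul_le_mul_of_nonneg_right h1 (by positivity)
        _ = _ := heq
    have hgeo4 : ∑ k ∈ Finset.range K, (4:ℝ) ^ k ≤ (4:ℝ) ^ K / 3 := by
      rw [geom_sum_eq (by norm_num : (4:ℝ) ≠ 1)]
      have : (0:ℝ) < 4 ^ K := by positivity
      rw [show (4:ℝ) - 1 = 3 by norm_num]
      linarith
    have hgeo2 : ∑ k ∈ Finset.range K, ((1:ℝ)/2) ^ k ≤ 2 := by
      rw [geom_sum_eq (by norm_num : (1:ℝ)/2 ≠ 1)]
      rw [div_le_iff_of_neg (by norm_num : (1:ℝ)/2 - 1 < 0)]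
      nlinarith [pow_nonneg (by norm_num : (0:ℝ) ≤ 1/2) K]
    have hhead : ∑ k ∈ Finset.range K,
        ((univ.filter (fun i => dist z (x i) ≤ 2 ^ (k+1) * r)).card : ℝ) * (2 ^ k * r)⁻¹
          ≤ 64 * Mbar * N * r ^ 2 * ((4:ℝ) ^ K / 3)
            + (8 * Mbar * N * lam ^ 3 / r) * 2 := by
      calc ∑ k ∈ Finset.range K,
            ((univ.filter (fun i => dist z (x i) ≤ 2 ^ (k+1) * r)).card : ℝ) * (2 ^ k * r)⁻¹
          ≤ ∑ k ∈ Finset.range K, (64 * Mbar * N * r ^ 2 * (4:ℝ) ^ k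
              + (8 * Mbar * N * lam ^ 3 / r) * ((1:ℝ)/2) ^ k) :=
            Finset.sum_le_sum hterm
        _ = 64 * Mbar * N * r ^ 2 * (∑ k ∈ Finset.range K, (4:ℝ) ^ k)
              + (8 * Mbar * N * lam ^ 3 / r) * (∑ k ∈ Finset.range K, ((1:ℝ)/2) ^ k) := by
            rw [Finset.sum_add_distrib, ← Finset.mul_sum, ← Finset.mul_sum]
        _ ≤ _ := by
            apply add_le_add
            · exact mul_le_mul_of_nonneg_left hgeo4 (by positivity)
            · exact mul_le_mul_of_nonneg_left hgeo2 (by positivity)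
    -- bound 4^K * r^2
    have h4Kr : 64 * Mbar * N * r ^ 2 * ((4:ℝ) ^ K / 3) ≤ 256/3 * (N : ℝ) * A := by
      have hsq : (2 ^ K * r) ^ 2 ≤ (2 * A⁻¹) ^ 2 := by
        apply pow_le_pow_left₀ (by positivity) hK2
      have h4k : (4:ℝ) ^ K * r ^ 2 = (2 ^ K * r) ^ 2 := by
        rw [mul_pow, ← pow_mul, mul_comm K 2, pow_mul]
        norm_num
      have hMA : Mbar * (A⁻¹) ^ 2 = A := by
        rw [← hA3]
        field_simp
      calc 64 * Mbar * N * r ^ 2 * ((4:ℝ) ^ K / 3)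
          = 64/3 * Mbar * N * ((4:ℝ) ^ K * r ^ 2) := by ring
        _ = 64/3 * Mbar * N * ((2 ^ K * r) ^ 2) := by rw [h4k]
        _ ≤ 64/3 * Mbar * N * ((2 * A⁻¹) ^ 2) := by
            apply mul_le_mul_of_nonneg_left hsq (by positivity)
        _ = 256/3 * (N:ℝ) * (Mbar * (A⁻¹) ^ 2) := by ring
        _ = 256/3 * (N:ℝ) * A := by rw [hMA]
    -- combine
    have hlam3r : (8 * Mbar * N * lam ^ 3 / r) * 2 = 32 * Mbar * N * lam ^ 3 / d := by
      rw [hrdef]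
      field_simp
      ring
    have hS : ∑ i ∈ univ.filter (fun i => r < dist z (x i)), (dist z (x i))⁻¹
        ≤ (N:ℝ) * (32 * Mbar * lam ^ 3 / d + (256/3 + 1) * A) := by
      have := hdy.trans (add_le_add hhead htail)
      have h2 : 64 * Mbar * N * r ^ 2 * ((4:ℝ) ^ K / 3)
            + (8 * Mbar * N * lam ^ 3 / r) * 2 + (N:ℝ) * A
          ≤ (N:ℝ) * (32 * Mbar * lam ^ 3 / d + (256/3 + 1) * A) := by
        rw [hlam3r]
        have hx1 : 32 * Mbar * (N:ℝ) * lam ^ 3 / d = (N:ℝ) * (32 * Mbar * lam ^ 3 / d) := by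
          field_simp
        have hx2 : (N:ℝ) * (32 * Mbar * lam ^ 3 / d + (256/3 + 1) * A)
            = (N:ℝ) * (32 * Mbar * lam ^ 3 / d) + 256/3 * (N:ℝ) * A + (N:ℝ) * A := by ring
        rw [hx1, hx2]
        linarith [h4Kr]
      linarith
    calc (1 / (N : ℝ)) * ∑ i ∈ univ.filter (fun i => r < dist z (x i)), (dist z (x i))⁻¹
        ≤ (1 / (N : ℝ)) * ((N:ℝ) * (32 * Mbar * lam ^ 3 / d + (256/3 + 1) * A)) :=
          mul_le_mul_of_nonneg_left hS (by positivity)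
      _ = 32 * Mbar * lam ^ 3 / d + (256/3 + 1) * A := by field_simp
      _ = 32 * (Mbar * lam ^ 3 / d) + (256/3 + 1) * A := by ring
      _ ≤ 100 * (Mbar * lam ^ 3 / d + A) := by linarith [hApos, hT0]
end

section
/- Let T > 0, C₁ > 0, b ≥ 0 and τ₀ > 0 with C₁·τ₀ ≤ 1/2. Let f : [0,T] → [0,∞) be a function such that for every t ∈ (0,T] and every τ with 0 < τ ≤ min(τ₀, t), one has f(t) ≤ f(t−τ) + C₁·τ·f(t) + τ·b. Then for every t ∈ [0,T], f(t) ≤ ( f(0) + t·b )·e^{2C₁t}. -/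
lemma aux16 (x : ℝ) (hx : 0 ≤ x) (hx' : x ≤ 1/2) : 1 ≤ (1 - x) * Real.exp (2*x) := by
  have h := Real.add_one_le_exp (2*x)
  nlinarith [Real.exp_pos (2*x)]

theorem stmt16 (T C1 b τ0 : ℝ) (hT : 0 < T) (hC1 : 0 < C1) (hb : 0 ≤ b)
    (hτ0 : 0 < τ0) (hτ0' : C1 * τ0 ≤ 1/2)
    (f : ℝ → ℝ) (hf : ∀ t ∈ Set.Icc (0:ℝ) T, 0 ≤ f t)
    (hstep : ∀ t ∈ Set.Ioc (0:ℝ) T, ∀ τ : ℝ, 0 < τ → τ ≤ min τ0 t →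
      f t ≤ f (t - τ) + C1 * τ * f t + τ * b) :
    ∀ t ∈ Set.Icc (0:ℝ) T, f t ≤ (f 0 + t * b) * Real.exp (2 * C1 * t) := by
  intro t ht
  rcases eq_or_lt_of_le ht.1 with h0 | h0
  · simp [← h0]
  set n : ℕ := ⌈t / τ0⌉₊ with hn
  have hnpos : 0 < n := by
    have : 0 < t / τ0 := div_pos h0 hτ0
    exact Nat.ceil_pos.mpr this
  have hnR : (0:ℝ) < n := by exact_mod_cast hnpos
  set τ : ℝ := t / n with hτ
  have hτpos : 0 < τ := div_pos h0 hnR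
  have hττ0 : τ ≤ τ0 := by
    rw [hτ, div_le_iff₀ hnR]
    have h1 : t / τ0 ≤ (n : ℝ) := Nat.le_ceil _
    have h2 : t ≤ (n:ℝ) * τ0 := (div_le_iff₀ hτ0).mp h1
    linarith
  have hnt : (n : ℝ) * τ = t := by rw [hτ]; field_simp [hnR.ne']
  have key : ∀ k : ℕ, k ≤ n → f (k * τ) ≤ (f 0 + (k * τ) * b) * Real.exp (2 * C1 * (k * τ)) := by
    intro k
    induction k with
    | zero => intro _; simp
    | succ k ih =>
      intro hk
      have hk' : k ≤ n := Nat.le_of_succ_le hk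
      have ih' := ih hk'
      have hkτ : (0:ℝ) ≤ k * τ := by positivity
      set s : ℝ := (k+1 : ℕ) * τ with hs
      have hspos : 0 < s := by
        have : (0:ℝ) < (k+1 : ℕ) := by exact_mod_cast Nat.succ_pos k
        positivity
      have hsT : s ≤ T := by
        have h1 : ((k+1:ℕ) : ℝ) ≤ (n : ℝ) := by exact_mod_cast hk
        have : s ≤ (n:ℝ) * τ := by
          rw [hs]; exact mul_le_mul_of_nonneg_right h1 hτpos.le
        rw [hnt] at this
        linarith [ht.2]
      have hτs : τ ≤ s := by
        have h1 : (1:ℝ) ≤ ((k+1:ℕ) : ℝ) := by exact_mod_cast Nat.one_le_iff_ne_zero.mpr (Nat.succ_ne_zero k)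
        calc τ = 1 * τ := (one_mul τ).symm
        _ ≤ s := by rw [hs]; exact mul_le_mul_of_nonneg_right h1 hτpos.le
      have hstep' := hstep s ⟨hspos, hsT⟩ τ hτpos (le_min hττ0 hτs)
      have hsub : s - τ = k * τ := by push_cast [hs]; ring
      rw [hsub] at hstep'
      have hfs : 0 ≤ f s := hf s ⟨hspos.le, hsT⟩
      have hC1τ : C1 * τ ≤ 1/2 := by nlinarith
      have hC1τ0 : 0 ≤ C1 * τ := by positivity
      have haux := aux16 (C1 * τ) hC1τ0 hC1τ
      have hE2 : (0:ℝ) < Real.exp (2 * (C1 * τ)) := Real.exp_pos _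
      -- f s ≤ (f (kτ) + τ b) * exp(2 C1 τ)
      have step1 : f s ≤ (f (k * τ) + τ * b) * Real.exp (2 * (C1 * τ)) := by
        nlinarith
      have hE1 : (1:ℝ) ≤ Real.exp (2 * C1 * (k * τ)) := by
        apply Real.one_le_exp; positivity
      have hsplit : Real.exp (2 * C1 * s) =
          Real.exp (2 * C1 * (k * τ)) * Real.exp (2 * (C1 * τ)) := by
        rw [← Real.exp_add]; congr 1; push_cast [hs]; ring
      have hf0 : 0 ≤ f 0 := hf 0 ⟨le_refl 0, hT.le⟩
      have hA : 0 ≤ f 0 + (k * τ) * b := by positivity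
      have hτb : 0 ≤ τ * b := by positivity
      have hgoal2 : (f (k*τ) + τ * b) * Real.exp (2 * (C1*τ)) ≤
          (f 0 + s * b) * Real.exp (2 * C1 * s) := by
        rw [hsplit]
        have hsval : s * b = (k*τ)*b + τ*b := by push_cast [hs]; ring
        rw [hsval]
        nlinarith [mul_le_mul_of_nonneg_right ih' hE2.le, mul_nonneg (mul_nonneg hτb hE2.le) (sub_nonneg.mpr hE1)]
      linarith
  have := key n le_rfl
  rwa [hnt] at this
end
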